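/- For n ≥ 3, the number of 132-avoiding permutations of length n with exactly n-3 matches of MMP(1,0,0,1) equals 3·C_{n-2}, where C_m is the m-th Catalan number. -/

import Mathlib

open Finset

/-- σ avoids the classical pattern 132. -/
def avoids132 {n : ℕ} (σ : Equiv.Perm (Fin n)) : Prop :=
  ¬ ∃ i j k : Fin n, i < j ∧ j < k ∧ σ i < σ k ∧ σ k < σ j

/-- position `i` matches the quadrant marked mesh pattern MMP(a,b,c,d) in σ. -/
def mmpMatch {n : ℕ} (a b c d : ℕ) (σ : Equiv.Perm (Fin n)) (i : Fin n) : Prop :=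
  a ≤ (Finset.univ.filter fun j => i < j ∧ σ i < σ j).card ∧
  b ≤ (Finset.univ.filter fun j => j < i ∧ σ i < σ j).card ∧
  c ≤ (Finset.univ.filter fun j => j < i ∧ σ j < σ i).card ∧
  d ≤ (Finset.univ.filter fun j => i < j ∧ σ j < σ i).card

/-- the number of positions of σ matching MMP(a,b,c,d). -/
noncomputable def mmp {n : ℕ} (a b c d : ℕ) (σ : Equiv.Perm (Fin n)) : ℕ :=
  Nat.card {i : Fin n // mmpMatch a b c d σ i}


open Finset List

/-- list avoids pattern 132 -/
def Av (l : List ℕ) : Prop := ∀ a b c : ℕ, [a,b,c].Sublist l → ¬(a < c ∧ c < b)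

def stat : List ℕ → ℕ
  | [] => 0
  | x :: s => stat s + (if (∃ y ∈ s, x < y) ∧ (∃ y ∈ s, y < x) then 1 else 0)

def sMc : List ℕ → ℕ
  | [] => 0
  | x :: s => sMc s + (if ∀ y ∈ s, y < x then 1 else 0)

def smc : List ℕ → ℕ
  | [] => 0
  | x :: s => smc s + (if ∀ y ∈ s, x < y then 1 else 0)

lemma stat_cons (x : ℕ) (s : List ℕ) :
    stat (x :: s) = stat s + (if (∃ y ∈ s, x < y) ∧ (∃ y ∈ s, y < x) then 1 else 0) := rfl

lemma sMc_cons (x : ℕ) (s : List ℕ) :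
    sMc (x :: s) = sMc s + (if ∀ y ∈ s, y < x then 1 else 0) := rfl

lemma smc_cons (x : ℕ) (s : List ℕ) :
    smc (x :: s) = smc s + (if ∀ y ∈ s, x < y then 1 else 0) := rfl

lemma Av.sublist {l l' : List ℕ} (h : Av l) (hs : l'.Sublist l) : Av l' :=
  fun a b c hsub => h a b c (hsub.trans hs)

lemma Av_nil : Av [] := by intro a b c h; simp at h

lemma stat_append_left (A B : List ℕ)
    (h1 : ∀ x ∈ A, ∃ y ∈ B, x < y) (h2 : ∀ x ∈ A, ∃ y ∈ B, y < x) :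
    stat (A ++ B) = A.length + stat B := by
  induction A with
  | nil => simp
  | cons a A ih =>
    have hm : (∃ y ∈ A ++ B, a < y) ∧ (∃ y ∈ A ++ B, y < a) := by
      obtain ⟨y, hy, hy2⟩ := h1 a (by simp)
      obtain ⟨z, hz, hz2⟩ := h2 a (by simp)
      exact ⟨⟨y, by simp [hy], hy2⟩, ⟨z, by simp [hz], hz2⟩⟩
    rw [List.cons_append, stat_cons, if_pos hm,
      ih (fun x hx => h1 x (by simp [hx])) (fun x hx => h2 x (by simp [hx]))]
    simp; omega

lemma sMc_append_lt (A B : List ℕ) (h : ∀ x ∈ A, ∃ y ∈ B, x < y) :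
    sMc (A ++ B) = sMc B := by
  induction A with
  | nil => simp
  | cons a A ih =>
    have hn : ¬ (∀ y ∈ A ++ B, y < a) := by
      obtain ⟨y, hy, hy2⟩ := h a (by simp)
      intro hall; exact absurd (hall y (by simp [hy])) (by omega)
    rw [List.cons_append, sMc_cons, if_neg hn,
      ih (fun x hx => h x (by simp [hx]))]
    omega

lemma sMc_append_gt (A B : List ℕ) (h : ∀ x ∈ A, ∀ y ∈ B, y < x) :
    sMc (A ++ B) = sMc A + sMc B := by
  induction A with
  | nil => simp [sMc]
  | cons a A ih =>
    have he : (∀ y ∈ A ++ B, y < a) ↔ (∀ y ∈ A, y < a) := by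
      constructor
      · intro hall y hy; exact hall y (by simp [hy])
      · intro hall y hy
        rcases List.mem_append.mp hy with hy | hy
        · exact hall y hy
        · exact h a (by simp) y hy
    rw [List.cons_append, sMc_cons, sMc_cons,
      ih (fun x hx => h x (by simp [hx]))]
    by_cases hc : ∀ y ∈ A, y < a
    · rw [if_pos (he.mpr hc), if_pos hc]; omega
    · rw [if_neg (fun hh => hc (he.mp hh)), if_neg hc]; omega

lemma smc_append_lt (A B : List ℕ) (h : ∀ x ∈ A, ∃ y ∈ B, y < x) :
    smc (A ++ B) = smc B := by
  induction A with
  | nil => simp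
  | cons a A ih =>
    have hn : ¬ (∀ y ∈ A ++ B, a < y) := by
      obtain ⟨y, hy, hy2⟩ := h a (by simp)
      intro hall; exact absurd (hall y (by simp [hy])) (by omega)
    rw [List.cons_append, smc_cons, if_neg hn,
      ih (fun x hx => h x (by simp [hx]))]
    omega

lemma smc_append_gt (A B : List ℕ) (h : ∀ x ∈ A, ∀ y ∈ B, x < y) :
    smc (A ++ B) = smc A + smc B := by
  induction A with
  | nil => simp [smc]
  | cons a A ih =>
    have he : (∀ y ∈ A ++ B, a < y) ↔ (∀ y ∈ A, a < y) := by
      constructor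
      · intro hall y hy; exact hall y (by simp [hy])
      · intro hall y hy
        rcases List.mem_append.mp hy with hy | hy
        · exact hall y hy
        · exact h a (by simp) y hy
    rw [List.cons_append, smc_cons, smc_cons,
      ih (fun x hx => h x (by simp [hx]))]
    by_cases hc : ∀ y ∈ A, a < y
    · rw [if_pos (he.mpr hc), if_pos hc]; omega
    · rw [if_neg (fun hh => hc (he.mp hh)), if_neg hc]; omega

lemma sMc_pos (l : List ℕ) (h : l ≠ []) : 1 ≤ sMc l := by
  induction l with
  | nil => simp at h
  | cons a s ih =>
    by_cases hs : s = []
    · subst hs; simp [sMc]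
    · have := ih hs; rw [sMc_cons]; omega

lemma smc_sorted (l : List ℕ) (h : l.Pairwise (· < ·)) : smc l = l.length := by
  induction l with
  | nil => simp [smc]
  | cons a s ih =>
    have h1 : ∀ y ∈ s, a < y := fun y hy => (List.pairwise_cons.mp h).1 y hy
    rw [smc_cons, if_pos h1, ih ((List.pairwise_cons.mp h).2), List.length_cons]

lemma stat_add_sMc_add_smc (l : List ℕ) (hne : l ≠ []) (hnd : l.Nodup) :
    stat l + sMc l + smc l = l.length + 1 := by
  induction l with
  | nil => simp at hne
  | cons x s ih =>
    by_cases hs : s = []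
    · subst hs; simp [stat, sMc, smc]
    · have hnd' := (List.nodup_cons.mp hnd).2
      have hx : x ∉ s := (List.nodup_cons.mp hnd).1
      have ihs := ih hs hnd'
      obtain ⟨y0, hy0⟩ := List.exists_mem_of_ne_nil s hs
      have hy0x : y0 ≠ x := fun h => hx (h ▸ hy0)
      rw [stat_cons, sMc_cons, smc_cons, List.length_cons]
      by_cases hP : ∃ y ∈ s, x < y
      · by_cases hQ : ∃ y ∈ s, y < x
        · have h1 : ¬ (∀ y ∈ s, y < x) := by
            obtain ⟨y, hy, hlt⟩ := hP; intro hall; have := hall y hy; omega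
          have h2 : ¬ (∀ y ∈ s, x < y) := by
            obtain ⟨y, hy, hlt⟩ := hQ; intro hall; have := hall y hy; omega
          rw [if_pos ⟨hP, hQ⟩, if_neg h1, if_neg h2]; omega
        · have h2 : ∀ y ∈ s, x < y := by
            intro y hy
            have hny : ¬ y < x := fun hlt => hQ ⟨y, hy, hlt⟩
            have hne2 : y ≠ x := fun h => hx (h ▸ hy)
            omega
          have h1 : ¬ (∀ y ∈ s, y < x) := by
            obtain ⟨y, hy, hlt⟩ := hP; intro hall; have := hall y hy; omega
          rw [if_neg (fun hc : _ ∧ _ => hQ hc.2), if_neg h1, if_pos h2]; omega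
      · have h1 : ∀ y ∈ s, y < x := by
          intro y hy
          have hny : ¬ x < y := fun hlt => hP ⟨y, hy, hlt⟩
          have hne2 : y ≠ x := fun h => hx (h ▸ hy)
          omega
        have h2 : ¬ (∀ y ∈ s, x < y) := by
          intro hall; have := hall y0 hy0; have := h1 y0 hy0; omega
        rw [if_neg (fun hc : _ ∧ _ => hP hc.1), if_pos h1, if_neg h2]; omega
-- chunk B : permsF, AvF, topk
noncomputable def permsF (S : Finset ℕ) : Finset (List ℕ) := S.toList.permutations.toFinset

lemma mem_permsF {S : Finset ℕ} {l : List ℕ} : l ∈ permsF S ↔ (l : Multiset ℕ) = S.val := by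
  rw [permsF, List.mem_toFinset, List.mem_permutations, ← Multiset.coe_eq_coe,
    Finset.coe_toList]

lemma permsF_nodup {S : Finset ℕ} {l : List ℕ} (h : l ∈ permsF S) : l.Nodup := by
  rw [mem_permsF] at h
  have := S.nodup
  rw [← h] at this
  exact this

lemma permsF_length {S : Finset ℕ} {l : List ℕ} (h : l ∈ permsF S) : l.length = S.card := by
  rw [mem_permsF] at h
  rw [Finset.card, ← h]; rfl

lemma permsF_mem_iff {S : Finset ℕ} {l : List ℕ} (h : l ∈ permsF S) {x : ℕ} :
    x ∈ l ↔ x ∈ S := by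
  rw [mem_permsF] at h
  rw [Finset.mem_def, ← h, Multiset.mem_coe]

open scoped Classical in
noncomputable def AvF (S : Finset ℕ) : Finset (List ℕ) := (permsF S).filter Av

lemma mem_AvF {S : Finset ℕ} {l : List ℕ} : l ∈ AvF S ↔ l ∈ permsF S ∧ Av l := by
  simp [AvF]

/-- cross property: in a 132-avoider, entries before the max exceed entries after it -/
lemma cross_of_av {L R : List ℕ} {M : ℕ} (hav : Av (L ++ M :: R))
    (hM : ∀ v ∈ L ++ M :: R, v ≤ M) (hnd : (L ++ M :: R).Nodup) :
    ∀ x ∈ L, ∀ y ∈ R, y < x := by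
  intro x hx y hy
  by_contra hcon
  have hxy : x ≠ y := by
    intro h; subst h
    rw [List.nodup_append'] at hnd
    exact hnd.2.2 hx (by simp [hy])
  have hxM : x ≠ M := by
    intro h; subst h
    rw [List.nodup_append'] at hnd
    exact hnd.2.2 hx (by simp)
  have hyM : y ≠ M := by
    have := List.nodup_cons.mp (hnd.of_append_right)
    intro h; subst h; exact this.1 hy
  have hxlt : x < M := lt_of_le_of_ne (hM x (by simp [hx])) hxM
  have hylt : y < M := lt_of_le_of_ne (hM y (by simp [hy])) hyM
  have hsub : [x, M, y].Sublist (L ++ M :: R) := by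
    have h1 : [x].Sublist L := List.singleton_sublist.mpr hx
    have h2 : [M, y].Sublist (M :: R) := (List.singleton_sublist.mpr hy).cons₂ M
    simpa using h1.append h2
  exact hav x M y hsub ⟨by omega, hylt⟩

/-- building composite avoiders: L (all large) ++ max ++ R (all small) -/
lemma av_compose {L R : List ℕ} {M : ℕ} (hL : Av L) (hR : Av R)
    (hM : ∀ v ∈ L ++ R, v < M) (hcross : ∀ x ∈ L, ∀ y ∈ R, y < x) :
    Av (L ++ M :: R) := by
  rintro a b c hsub ⟨hac, hcb⟩
  rw [List.sublist_append_iff] at hsub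
  obtain ⟨u, v, huv, hu, hv⟩ := hsub
  rcases u with _ | ⟨u1, u⟩
  · rw [List.nil_append] at huv; subst huv
    rcases List.sublist_cons_iff.mp hv with h | ⟨r, hr, hrs⟩
    · exact hR a b c h ⟨hac, hcb⟩
    · obtain ⟨ha, hr2⟩ := List.cons_eq_cons.mp hr
      subst ha; subst hr2
      have hb : b ∈ R := hrs.mem (by simp)
      have := hM b (by simp [hb]); omega
  rcases u with _ | ⟨u2, u⟩
  · simp only [List.cons_append, List.nil_append, List.cons.injEq] at huv
    obtain ⟨ha, hv2⟩ := huv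
    subst ha; subst hv2
    have haL : a ∈ L := hu.mem (by simp)
    rcases List.sublist_cons_iff.mp hv with h | ⟨r, hr, hrs⟩
    · have hc : c ∈ R := h.mem (by simp)
      have := hcross a haL c hc; omega
    · obtain ⟨hb, hr2⟩ := List.cons_eq_cons.mp hr
      subst hb; subst hr2
      have hc : c ∈ R := hrs.mem (by simp)
      have := hcross a haL c hc; omega
  rcases u with _ | ⟨u3, u⟩
  · simp only [List.cons_append, List.nil_append, List.cons.injEq] at huv
    obtain ⟨ha, hb, hv2⟩ := huv
    subst ha; subst hb; subst hv2
    have hbL : b ∈ L := hu.mem (by simp)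
    have haL : a ∈ L := hu.mem (by simp)
    rcases List.sublist_cons_iff.mp hv with h | ⟨r, hr, hrs⟩
    · have hc : c ∈ R := h.mem (by simp)
      have := hcross a haL c hc; omega
    · obtain ⟨hc, hr2⟩ := List.cons_eq_cons.mp hr
      subst hc
      have := hM b (by simp [hbL]); omega
  · simp only [List.cons_append, List.nil_append, List.cons.injEq] at huv
    obtain ⟨ha, hb, hc, hrest⟩ := huv
    subst ha; subst hb; subst hc
    have hu0 : u = [] ∧ v = [] := by
      have := congrArg List.length hrest
      simp at this
      exact ⟨List.eq_nil_of_length_eq_zero (by omega),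
        List.eq_nil_of_length_eq_zero (by omega)⟩
    obtain ⟨h1, h2⟩ := hu0
    subst h1; subst h2
    exact hL a b c hu ⟨hac, hcb⟩
-- chunk C : topF/botF and catalan count
noncomputable def topkL (S : Finset ℕ) (j : ℕ) : List ℕ := (S.sort (·≤·)).drop (S.card - j)
noncomputable def botkL (S : Finset ℕ) (j : ℕ) : List ℕ := (S.sort (·≤·)).take (S.card - j)
noncomputable def topF (S : Finset ℕ) (j : ℕ) : Finset ℕ := (topkL S j).toFinset
noncomputable def botF (S : Finset ℕ) (j : ℕ) : Finset ℕ := (botkL S j).toFinset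

lemma list_toFinset_val {l : List ℕ} (h : l.Nodup) : l.toFinset.val = (l : Multiset ℕ) := by
  have : (l : Multiset ℕ).Nodup := h
  simp [List.toFinset, Multiset.toFinset, Multiset.dedup_eq_self.mpr this]

lemma topkL_nodup (S : Finset ℕ) (j : ℕ) : (topkL S j).Nodup :=
  (List.drop_sublist _ _).nodup (Finset.sort_nodup S _)

lemma botkL_nodup (S : Finset ℕ) (j : ℕ) : (botkL S j).Nodup :=
  (List.take_sublist _ _).nodup (Finset.sort_nodup S _)

lemma topF_card (S : Finset ℕ) (j : ℕ) (h : j ≤ S.card) : (topF S j).card = j := by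
  rw [topF, List.toFinset_card_of_nodup (topkL_nodup S j), topkL, List.length_drop,
    Finset.length_sort]
  omega

lemma botF_card (S : Finset ℕ) (j : ℕ) : (botF S j).card = S.card - j := by
  rw [botF, List.toFinset_card_of_nodup (botkL_nodup S j), botkL, List.length_take,
    Finset.length_sort]
  omega

lemma topF_subset (S : Finset ℕ) (j : ℕ) : topF S j ⊆ S := by
  intro x hx
  rw [topF, List.mem_toFinset] at hx
  exact (Finset.mem_sort _).mp ((List.drop_sublist _ _).mem hx)

lemma botF_subset (S : Finset ℕ) (j : ℕ) : botF S j ⊆ S := by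
  intro x hx
  rw [botF, List.mem_toFinset] at hx
  exact (Finset.mem_sort _).mp ((List.take_sublist _ _).mem hx)

lemma botF_topF_cross (S : Finset ℕ) (j : ℕ) :
    ∀ x ∈ botF S j, ∀ y ∈ topF S j, x < y := by
  intro x hx y hy
  rw [botF, List.mem_toFinset] at hx
  rw [topF, List.mem_toFinset] at hy
  have hs : List.Pairwise (· < ·) (botkL S j ++ topkL S j) := by
    rw [botkL, topkL, List.take_append_drop]
    exact (Finset.sortedLT_sort S).pairwise
  exact (List.pairwise_append.mp hs).2.2 x hx y hy

lemma topF_disj_botF (S : Finset ℕ) (j : ℕ) : ∀ x ∈ topF S j, x ∉ botF S j := by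
  intro x hx hx2
  exact lt_irrefl x (botF_topF_cross S j x hx2 x hx)

lemma mem_topF_or_botF (S : Finset ℕ) (j : ℕ) {x : ℕ} (h : x ∈ S) :
    x ∈ topF S j ∨ x ∈ botF S j := by
  rw [topF, botF, List.mem_toFinset, List.mem_toFinset]
  have : x ∈ botkL S j ++ topkL S j := by
    rw [botkL, topkL, List.take_append_drop]
    exact (Finset.mem_sort _).mpr h
  rw [List.mem_append] at this
  tauto

lemma topF_val_add_botF_val (S : Finset ℕ) (j : ℕ) :
    (topF S j).val + (botF S j).val = S.val := by
  rw [topF, botF, list_toFinset_val (topkL_nodup S j), list_toFinset_val (botkL_nodup S j)]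
  have : ((topkL S j : Multiset ℕ) + (botkL S j : Multiset ℕ)) =
      ((botkL S j ++ topkL S j : List ℕ) : Multiset ℕ) := by
    rw [Multiset.coe_add]
    exact Multiset.coe_eq_coe.mpr (List.perm_append_comm)
  rw [this, botkL, topkL, List.take_append_drop]
  rw [← Finset.coe_toList S]
  exact Multiset.coe_eq_coe.mpr (Finset.sort_perm_toList S (·≤·))

/-- uniqueness of the upper set -/
lemma eq_topF {S U : Finset ℕ} {j : ℕ} (hU : U ⊆ S) (hcard : U.card = j) (hj : j ≤ S.card)
    (hupper : ∀ x ∈ U, ∀ y ∈ S, y ∉ U → y < x) : U = topF S j := by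
  have hsub : U ⊆ topF S j := by
    intro u hu
    by_contra hcon
    have h1 : ¬ (topF S j ⊆ U) := by
      intro hsub2
      have := Finset.eq_of_subset_of_card_le hsub2 (by rw [topF_card S j hj, hcard])
      rw [this] at hcon; exact hcon hu
    obtain ⟨t, ht, htU⟩ := Finset.not_subset.mp h1
    have h2 : t < u := hupper u hu t (topF_subset S j ht) htU
    have h3 : u ∈ botF S j := (mem_topF_or_botF S j (hU hu)).resolve_left hcon
    have h4 : u < t := botF_topF_cross S j u h3 t ht
    omega
  exact Finset.eq_of_subset_of_card_le hsub (by rw [topF_card S j hj, hcard])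

lemma append_cons_inj {M : ℕ} : ∀ (L₁ L₂ R₁ R₂ : List ℕ), M ∉ L₁ → M ∉ L₂ →
    L₁ ++ M :: R₁ = L₂ ++ M :: R₂ → L₁ = L₂ ∧ R₁ = R₂ := by
  intro L₁
  induction L₁ with
  | nil =>
    intro L₂ R₁ R₂ _ hM2 h
    cases L₂ with
    | nil => simpa using h
    | cons b L₂ =>
      simp only [List.nil_append, List.cons_append, List.cons.injEq] at h
      exact absurd (by rw [h.1]; simp : M ∈ b :: L₂) hM2
  | cons a L₁ ih =>
    intro L₂ R₁ R₂ hM1 hM2 h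
    cases L₂ with
    | nil =>
      simp only [List.cons_append, List.nil_append, List.cons.injEq] at h
      exact absurd (by rw [← h.1]; simp : M ∈ a :: L₁) hM1
    | cons b L₂ =>
      simp only [List.cons_append, List.cons.injEq] at h
      obtain ⟨hab, hrest⟩ := h
      subst hab
      obtain ⟨h1, h2⟩ := ih L₂ R₁ R₂ (fun hm => hM1 (by simp [hm])) (fun hm => hM2 (by simp [hm])) hrest
      exact ⟨by rw [h1], h2⟩
-- chunk D : |AvF S| = catalan |S|
lemma AvF_empty : AvF (∅ : Finset ℕ) = {[]} := by
  ext l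
  rw [mem_AvF, mem_permsF]
  constructor
  · rintro ⟨h1, _⟩
    have : l = [] := (Multiset.coe_eq_zero l).mp h1
    simp [this]
  · rintro h
    rw [Finset.mem_singleton] at h
    subst h
    exact ⟨rfl, Av_nil⟩

theorem AvF_card_catalan : ∀ (n : ℕ) (S : Finset ℕ), S.card = n → (AvF S).card = catalan n := by
  intro n
  induction n using Nat.strong_induction_on with
  | _ n ih =>
    intro S hS
    match n, hS with
    | 0, hS =>
      have : S = ∅ := Finset.card_eq_zero.mp hS
      subst this
      rw [AvF_empty]
      simp
    | (m+1), hS =>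
      have hne : S.Nonempty := by rw [← Finset.card_pos, hS]; omega
      set M := S.max' hne with hMdef
      set S' := S.erase M with hS'def
      have hMS : M ∈ S := S.max'_mem hne
      have hS' : S'.card = m := by
        rw [hS'def, Finset.card_erase_of_mem hMS, hS]; omega
      have hMS' : M ∉ S' := Finset.notMem_erase _ _
      have hSval : S.val = M ::ₘ S'.val := by
        rw [hS'def, Finset.erase_val, Multiset.cons_erase (Finset.mem_def.mp hMS)]
      have hltM : ∀ v ∈ S', v < M :=
        fun v hv => lt_of_le_of_ne (S.le_max' v (Finset.mem_of_mem_erase hv))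
          (Finset.ne_of_mem_erase hv)
      -- membership in top/bot for components
      have hmemtop : ∀ {j} {L : List ℕ}, L ∈ permsF (topF S' j) → ∀ x ∈ L, x ∈ topF S' j :=
        fun h x hx => (permsF_mem_iff h).mp hx
      have hmembot : ∀ {j} {R : List ℕ}, R ∈ permsF (botF S' j) → ∀ x ∈ R, x ∈ botF S' j :=
        fun h x hx => (permsF_mem_iff h).mp hx
      have hkey : AvF S = (Finset.range (m+1)).biUnion (fun j =>
          ((AvF (topF S' j)) ×ˢ (AvF (botF S' j))).image (fun p => p.1 ++ M :: p.2)) := by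
        ext l
        constructor
        · intro hl
          obtain ⟨hperm, hav⟩ := mem_AvF.mp hl
          have hnd : l.Nodup := permsF_nodup hperm
          have hlen : l.length = m + 1 := by rw [permsF_length hperm, hS]
          have hMl : M ∈ l := (permsF_mem_iff hperm).mpr hMS
          obtain ⟨L, R, hLR⟩ := List.append_of_mem hMl
          subst hLR
          have hndL : L.Nodup := (List.sublist_append_left L (M :: R)).nodup hnd
          have hndMR : (M :: R).Nodup := (List.sublist_append_right L (M :: R)).nodup hnd
          have hML : M ∉ L := by
            have := List.nodup_append'.mp hnd
            exact fun hm => this.2.2 hm (by simp)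
          have hMR : M ∉ R := (List.nodup_cons.mp hndMR).1
          set j := L.length with hjdef
          have hjm : j ≤ m := by
            have := congrArg List.length (rfl : L ++ M :: R = L ++ M :: R)
            simp [List.length_append] at hlen
            omega
          have hmax : ∀ v ∈ L ++ M :: R, v ≤ M :=
            fun v hv => S.le_max' v ((permsF_mem_iff hperm).mp hv)
          have hcross := cross_of_av hav hmax hnd
          have hLS' : ∀ x ∈ L, x ∈ S' := by
            intro x hx
            rw [hS'def, Finset.mem_erase]
            exact ⟨fun h => hML (h ▸ hx), (permsF_mem_iff hperm).mp (by simp [hx])⟩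
          have hRS' : ∀ x ∈ R, x ∈ S' := by
            intro x hx
            rw [hS'def, Finset.mem_erase]
            exact ⟨fun h => hMR (h ▸ hx), (permsF_mem_iff hperm).mp (by simp [hx])⟩
          have hLtop : L.toFinset = topF S' j := by
            apply eq_topF
            · intro x hx; exact hLS' x (List.mem_toFinset.mp hx)
            · rw [List.toFinset_card_of_nodup hndL]
            · omega
            · intro x hx y hy hyn
              rw [List.mem_toFinset] at hx
              rw [List.mem_toFinset] at hyn
              have hyl : y ∈ L ++ M :: R := by
                have : y ∈ S := Finset.mem_of_mem_erase hy
                exact (permsF_mem_iff hperm).mpr this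
              have hyR : y ∈ R := by
                rcases List.mem_append.mp hyl with h | h
                · exact absurd h hyn
                · rcases List.mem_cons.mp h with h | h
                  · exact absurd h (by rw [hS'def] at hy; exact Finset.ne_of_mem_erase hy)
                  · exact h
              exact hcross x hx y hyR
          have hLval : (L : Multiset ℕ) = (topF S' j).val := by
            rw [← hLtop, list_toFinset_val hndL]
          have hRval : (R : Multiset ℕ) = (botF S' j).val := by
            have h1 : (L : Multiset ℕ) + (M ::ₘ (R : Multiset ℕ)) = M ::ₘ S'.val := by
              have := mem_permsF.mp hperm
              rw [← hSval, ← this]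
              simp
            have h2 : (topF S' j).val + (botF S' j).val = S'.val := topF_val_add_botF_val S' j
            have h3 : (L : Multiset ℕ) + (M ::ₘ (R : Multiset ℕ)) =
                M ::ₘ ((L : Multiset ℕ) + (R : Multiset ℕ)) := by
              rw [Multiset.add_cons]
            rw [h3] at h1
            have h4 : (L : Multiset ℕ) + (R : Multiset ℕ) = S'.val := by
              exact (Multiset.cons_inj_right M).mp h1
            rw [hLval, ← h2] at h4
            exact add_left_cancel h4
          refine Finset.mem_biUnion.mpr ⟨j, Finset.mem_range.mpr (by omega), ?_⟩
          refine Finset.mem_image.mpr ⟨(L, R), ?_, rfl⟩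
          refine Finset.mem_product.mpr ⟨?_, ?_⟩
          · exact mem_AvF.mpr ⟨mem_permsF.mpr hLval,
              hav.sublist (List.sublist_append_left L (M :: R))⟩
          · exact mem_AvF.mpr ⟨mem_permsF.mpr hRval,
              hav.sublist ((List.sublist_cons_self M R).trans (List.sublist_append_right L (M :: R)))⟩
        · intro hl
          obtain ⟨j, hj, hlim⟩ := Finset.mem_biUnion.mp hl
          obtain ⟨⟨L, R⟩, hp, hLR⟩ := Finset.mem_image.mp hlim
          obtain ⟨hpL, hpR⟩ := Finset.mem_product.mp hp
          obtain ⟨hLperm, hLav⟩ := mem_AvF.mp hpL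
          obtain ⟨hRperm, hRav⟩ := mem_AvF.mp hpR
          subst hLR
          have hLmem := hmemtop hLperm
          have hRmem := hmembot hRperm
          have hLS' : ∀ x ∈ L, x ∈ S' := fun x hx => topF_subset S' j (hLmem x hx)
          have hRS' : ∀ x ∈ R, x ∈ S' := fun x hx => botF_subset S' j (hRmem x hx)
          refine mem_AvF.mpr ⟨?_, ?_⟩
          · rw [mem_permsF]
            have : ((L ++ M :: R : List ℕ) : Multiset ℕ) =
                M ::ₘ ((L : Multiset ℕ) + (R : Multiset ℕ)) := by
              simp [Multiset.add_cons]
            rw [this, mem_permsF.mp hLperm, mem_permsF.mp hRperm,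
              topF_val_add_botF_val S' j, hSval]
          · apply av_compose hLav hRav
            · intro v hv
              rcases List.mem_append.mp hv with h | h
              · exact hltM v (hLS' v h)
              · exact hltM v (hRS' v h)
            · intro x hx y hy
              exact botF_topF_cross S' j y (hRmem y hy) x (hLmem x hx)
      rw [hkey]
      have hML : ∀ {j} {L : List ℕ}, L ∈ permsF (topF S' j) → M ∉ L := by
        intro j L h hm
        exact hMS' (topF_subset S' j ((permsF_mem_iff h).mp hm))
      rw [Finset.card_biUnion]
      · have hterm : ∀ j ∈ Finset.range (m+1),
            (((AvF (topF S' j)) ×ˢ (AvF (botF S' j))).image (fun p => p.1 ++ M :: p.2)).card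
              = catalan j * catalan (m - j) := by
          intro j hj
          have hj' : j ≤ m := by rw [Finset.mem_range] at hj; omega
          rw [Finset.card_image_of_injOn, Finset.card_product]
          · rw [ih j (by omega) (topF S' j) (by rw [topF_card S' j (by omega)]),
              ih (m - j) (by omega) (botF S' j) (by rw [botF_card S' j, hS'])]
          · rintro ⟨L₁, R₁⟩ hp1 ⟨L₂, R₂⟩ hp2 heq
            obtain ⟨hpL1, hpR1⟩ := Finset.mem_product.mp hp1
            obtain ⟨hpL2, hpR2⟩ := Finset.mem_product.mp hp2
            have h1 := hML (mem_AvF.mp hpL1).1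
            have h2 := hML (mem_AvF.mp hpL2).1
            obtain ⟨e1, e2⟩ := append_cons_inj L₁ L₂ R₁ R₂ h1 h2 heq
            simp [e1, e2]
        rw [Finset.sum_congr rfl hterm, catalan_succ, ← Fin.sum_univ_eq_sum_range]
      · intro j1 hj1 j2 hj2 hne12
        rw [Finset.mem_coe, Finset.mem_range] at hj1 hj2
        rw [Function.onFun, Finset.disjoint_left]
        intro l hl1 hl2
        obtain ⟨⟨L₁, R₁⟩, hp1, hLR1⟩ := Finset.mem_image.mp hl1
        obtain ⟨⟨L₂, R₂⟩, hp2, hLR2⟩ := Finset.mem_image.mp hl2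
        obtain ⟨hpL1, _⟩ := Finset.mem_product.mp hp1
        obtain ⟨hpL2, _⟩ := Finset.mem_product.mp hp2
        have h1 := hML (mem_AvF.mp hpL1).1
        have h2 := hML (mem_AvF.mp hpL2).1
        have heq : L₁ ++ M :: R₁ = L₂ ++ M :: R₂ := by rw [hLR1, hLR2]
        obtain ⟨e1, _⟩ := append_cons_inj L₁ L₂ R₁ R₂ h1 h2 heq
        apply hne12
        have hlen1 : L₁.length = (topF S' j1).card := by
          rw [← permsF_length (mem_AvF.mp hpL1).1]
        have hlen2 : L₂.length = (topF S' j2).card := by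
          rw [← permsF_length (mem_AvF.mp hpL2).1]
        rw [topF_card S' j1 (by omega), topF_card S' j2 (by omega)] at *
        rw [← hlen1, ← hlen2, e1]
-- chunk E : structural helpers
lemma sublist_pair {v : List ℕ} {a b : ℕ} (h : v.Sublist [a, b]) :
    v = [] ∨ v = [a] ∨ v = [b] ∨ v = [a, b] := by
  rcases List.sublist_cons_iff.mp h with h' | ⟨r, hr, hrs⟩
  · rcases List.sublist_singleton.mp h' with h'' | h'' <;> simp [h'']
  · rcases List.sublist_singleton.mp hrs with h'' | h'' <;> subst h'' <;> simp [hr]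

/-- in a 132-avoider, everything after the minimum is increasing -/
lemma av_after_min {P Q : List ℕ} {m : ℕ} (hav : Av (P ++ m :: Q))
    (hnd : Q.Nodup) (hm : ∀ v ∈ Q, m < v) : Q.Pairwise (· < ·) := by
  rw [List.pairwise_iff_forall_sublist]
  intro a b hab
  have hne : a ≠ b := by
    have := hab.nodup hnd
    simp at this
    tauto
  rcases Nat.lt_or_ge a b with h | h
  · exact h
  have hsub : [m, a, b].Sublist (P ++ m :: Q) := by
    have h2 : [m, a, b].Sublist (m :: Q) := hab.cons₂ m
    exact h2.trans (List.sublist_append_right P (m :: Q))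
  exact absurd ⟨hm b (hab.mem (by simp)), by omega⟩ (hav m a b hsub)

/-- in a 132-avoider ending with x, the values greater than x form a prefix -/
lemma av_prefix_split {A : List ℕ} {x : ℕ} (hav : Av (A ++ [x]))
    (hne : ∀ v ∈ A, v ≠ x) :
    ∃ L B, A = L ++ B ∧ (∀ v ∈ L, x < v) ∧ (∀ v ∈ B, v < x) := by
  refine ⟨A.takeWhile (fun v => x < v), A.dropWhile (fun v => x < v),
    List.takeWhile_append_dropWhile.symm, ?_, ?_⟩
  · intro v hv
    have := List.mem_takeWhile_imp hv
    simpa using this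
  · intro v hv
    set B := A.dropWhile (fun v => x < v) with hB
    rcases hBc : B with _ | ⟨b, B'⟩
    · rw [hBc] at hv; simp at hv
    · have hhead : ¬ (x < b) := by
        have := List.head?_dropWhile_not (fun v => (decide (x < v))) A
        rw [← hB, hBc] at this
        simpa using this
      have hbA : b ∈ A := by
        rw [← List.takeWhile_append_dropWhile (p := fun v => decide (x < v)) (l := A), ← hB, hBc]
        simp
      have hbx : b < x := lt_of_le_of_ne (by omega) (hne b hbA)
      rw [hBc] at hv
      rcases List.mem_cons.mp hv with h | h
      · omega
      · -- v ∈ B' : if x < v we get a 132 pattern [b, v, x]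
        by_contra hcon
        have hvA : v ∈ A := by
          rw [← List.takeWhile_append_dropWhile (p := fun v => decide (x < v)) (l := A), ← hB, hBc]
          simp [h]
        have hvx : x < v := by
          have := hne v hvA; omega
        have hsub : [b, v, x].Sublist (A ++ [x]) := by
          have h1 : [b, v].Sublist B := by
            rw [hBc]
            exact (List.singleton_sublist.mpr h).cons₂ b
          have h2 : [b, v].Sublist A := by
            rw [← List.takeWhile_append_dropWhile (p := fun v => decide (x < v)) (l := A), ← hB]
            exact h1.trans (List.sublist_append_right _ _)
          simpa using h2.append (List.Sublist.refl [x])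
        exact hav b v x hsub ⟨hbx, hvx⟩

/-- if a nonempty list has exactly one suffix maximum, its last element is its max -/
lemma sMc_eq_one_last_max : ∀ (B : List ℕ) (x : ℕ), (B ++ [x]).Nodup →
    sMc (B ++ [x]) = 1 → ∀ v ∈ B, v < x := by
  intro B
  induction B with
  | nil => intro x _ _ v hv; simp at hv
  | cons b B ih =>
    intro x hnd h1 v hv
    rw [List.cons_append, sMc_cons] at h1
    have hpos : 1 ≤ sMc (B ++ [x]) := sMc_pos _ (by simp)
    have hind : ¬ (∀ y ∈ B ++ [x], y < b) := by
      intro hall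
      rw [if_pos hall] at h1; omega
    have h2 : sMc (B ++ [x]) = 1 := by
      by_cases hc : ∀ y ∈ B ++ [x], y < b
      · exact absurd hc hind
      · rw [if_neg hc] at h1; omega
    have hIH := ih x ((List.sublist_cons_self b _).nodup hnd) h2
    rcases List.mem_cons.mp hv with h | h
    · -- v = b : need b < x
      subst h
      obtain ⟨y, hy, hy2⟩ := by
        push_neg at hind
        exact hind
      have hbx : v ≠ x := by
        intro he
        rw [List.cons_append, List.nodup_cons] at hnd
        exact hnd.1 (he ▸ (by simp : x ∈ B ++ [x]))
      rcases List.mem_append.mp hy with h' | h'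
      · have := hIH y h'; omega
      · simp at h'; subst h'; omega
    · exact hIH v h

/-- inserting the minimum just before the last element preserves avoidance -/
lemma av_insert_min {P : List ℕ} {x m : ℕ} (hav : Av (P ++ [x]))
    (hm : ∀ v ∈ P ++ [x], m < v) : Av (P ++ [m, x]) := by
  rintro a b c hsub ⟨hac, hcb⟩
  rw [List.sublist_append_iff] at hsub
  obtain ⟨u, v, huv, hu, hv⟩ := hsub
  rcases sublist_pair hv with h | h | h | h <;> subst h
  · rw [List.append_nil] at huv; subst huv
    exact hav a b c (hu.trans (List.sublist_append_left _ _)) ⟨hac, hcb⟩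
  · -- v = [m] : c = m, but a ∈ P and m < a
    have hc : c = m := by
      have := congrArg (List.getLast? ·) huv
      simp at this
      omega
    have ha : a ∈ P := hu.mem (by
      rcases u with _ | ⟨u1, u⟩
      · simp at huv
      · have : u1 = a := by
          have := congrArg List.head? huv
          simpa using this.symm
        simp [this])
    have := hm a (by simp [ha]); omega
  · -- v = [x] : pattern inside P ++ [x]
    have : [a, b, c].Sublist (P ++ [x]) := by
      rw [huv]; exact hu.append (List.Sublist.refl _)
    exact hav a b c this ⟨hac, hcb⟩
  · -- v = [m, x] : b = m or deeper
    rcases u with _ | ⟨u1, u⟩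
    · simp at huv
    · -- u = [a], so b = m, c = x : c < b means x < m, contradiction
      have h1 : u = [] := by
        have hl := congrArg List.length huv
        simp only [List.length_cons, List.length_append] at hl
        exact List.eq_nil_of_length_eq_zero (by omega)
      subst h1
      simp at huv
      obtain ⟨h2, h3, h4⟩ := huv
      have hx := hm x (by simp)
      omega

/-- appending the minimum preserves avoidance -/
lemma av_concat_min {A : List ℕ} {m : ℕ} (hav : Av A) (hm : ∀ v ∈ A, m < v) :
    Av (A ++ [m]) := by
  rintro a b c hsub ⟨hac, hcb⟩
  rw [List.sublist_append_iff] at hsub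
  obtain ⟨u, v, huv, hu, hv⟩ := hsub
  rcases List.sublist_singleton.mp hv with h | h <;> subst h
  · rw [List.append_nil] at huv; subst huv
    exact hav a b c hu ⟨hac, hcb⟩
  · have hc : c = m := by
      have := congrArg (List.getLast? ·) huv
      simp at this
      omega
    have ha : a ∈ A := hu.mem (by
      rcases u with _ | ⟨u1, u⟩
      · simp at huv
      · have : u1 = a := by
          have := congrArg List.head? huv
          simpa using this.symm
        simp [this])
    have := hm a (by simp [ha]); omega
-- chunk F : characterization of stat = n-3 avoiders
lemma sMc_single (a : ℕ) : sMc [a] = 1 := by simp [sMc]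
lemma smc_single (a : ℕ) : smc [a] = 1 := by simp [smc]

lemma char_main {S : Finset ℕ} {m M : ℕ} (hm : m ∈ S) (hM : M ∈ S)
    (hmin : ∀ v ∈ S, m ≤ v) (hmax : ∀ v ∈ S, v ≤ M) (hmM : m ≠ M)
    {l : List ℕ} (hperm : l ∈ permsF S) (hav : Av l) (hsum : sMc l + smc l = 4) :
    (∃ P x, l = P ++ [m, x, M]) ∨
    (∃ L B x, l = L ++ M :: B ++ [m, x] ∧ (∀ v ∈ B, v < x) ∧ (∀ v ∈ L, x < v)) ∨
    (∃ L B x, l = L ++ M :: B ++ [x, m] ∧ (∀ v ∈ B, v < x) ∧ (∀ v ∈ L, x < v)) := by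
  have hnd : l.Nodup := permsF_nodup hperm
  have hMl : M ∈ l := (permsF_mem_iff hperm).mpr hM
  obtain ⟨L, R, hLR⟩ := List.append_of_mem hMl
  subst hLR
  have hmemS : ∀ v ∈ L ++ M :: R, v ∈ S := fun v hv => (permsF_mem_iff hperm).mp hv
  have hmaxl : ∀ v ∈ L ++ M :: R, v ≤ M := fun v hv => hmax v (hmemS v hv)
  have hcross := cross_of_av hav hmaxl hnd
  have hML : M ∉ L := by
    have := List.nodup_append'.mp hnd
    exact fun hmem => this.2.2 hmem (by simp)
  have hndMR : (M :: R).Nodup := (List.sublist_append_right L (M :: R)).nodup hnd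
  have hMR : M ∉ R := (List.nodup_cons.mp hndMR).1
  have hltL : ∀ v ∈ L, v < M := fun v hv =>
    lt_of_le_of_ne (hmaxl v (by simp [hv])) (fun h => hML (h ▸ hv))
  have hltR : ∀ v ∈ R, v < M := fun v hv =>
    lt_of_le_of_ne (hmaxl v (by simp [hv])) (fun h => hMR (h ▸ hv))
  have hminl : ∀ v ∈ L ++ M :: R, m ≤ v := fun v hv => hmin v (hmemS v hv)
  by_cases hR : R = []
  · -- shape 1
    subst hR
    left
    have h1 : sMc (L ++ [M]) = 1 := by
      rw [sMc_append_lt L [M] (fun x hx => ⟨M, by simp, hltL x hx⟩), sMc_single]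
    have h2 : smc (L ++ [M]) = smc L + 1 := by
      rw [smc_append_gt L [M] (fun x hx y hy => by simp at hy; subst hy; exact hltL x hx), smc_single]
    have hsmcL : smc L = 2 := by
      have := hltL
      omega
    have hmL : m ∈ L := by
      have : m ∈ L ++ [M] := (permsF_mem_iff hperm).mpr hm
      rcases List.mem_append.mp this with h | h
      · exact h
      · simp at h; exact absurd h hmM
    obtain ⟨P, Q, hPQ⟩ := List.append_of_mem hmL
    subst hPQ
    have hndL : (P ++ m :: Q).Nodup := (List.sublist_append_left _ [M]).nodup hnd
    have hmP : m ∉ P := by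
      have := List.nodup_append'.mp hndL
      exact fun hmem => this.2.2 hmem (by simp)
    have hmQ : m ∉ Q := (List.nodup_cons.mp ((List.sublist_append_right P _).nodup hndL)).1
    have hQm : ∀ v ∈ Q, m < v := fun v hv =>
      lt_of_le_of_ne (hminl v (by simp [hv])) (fun h => hmQ (h ▸ hv))
    have hQsorted : Q.Pairwise (· < ·) :=
      av_after_min (hav.sublist (List.sublist_append_left _ [M]))
        ((List.sublist_cons_self m Q).nodup ((List.sublist_append_right P _).nodup hndL)) hQm
    have h3 : smc (P ++ m :: Q) = smc (m :: Q) :=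
      smc_append_lt P (m :: Q) (fun x hx => ⟨m, by simp,
        lt_of_le_of_ne (hminl x (by simp [hx])) (fun h => hmP (h ▸ hx))⟩)
    have h4 : smc (m :: Q) = smc Q + 1 := by rw [smc_cons, if_pos hQm]
    have h5 : smc Q = Q.length := smc_sorted Q hQsorted
    have hQ1 : Q.length = 1 := by omega
    obtain ⟨q, hq⟩ := List.length_eq_one_iff.mp hQ1
    subst hq
    exact ⟨P, q, by simp⟩
  · -- R nonempty
    obtain ⟨y0, hy0⟩ := List.exists_mem_of_ne_nil R hR
    have hmR : m ∈ R := by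
      have hml : m ∈ L ++ M :: R := (permsF_mem_iff hperm).mpr hm
      rcases List.mem_append.mp hml with h | h
      · exact absurd (hmin y0 (hmemS y0 (by simp [hy0]))) (by
          have := hcross m h y0 hy0
          omega)
      · rcases List.mem_cons.mp h with h | h
        · exact absurd h hmM
        · exact h
    have h1 : sMc (L ++ M :: R) = sMc R + 1 := by
      rw [sMc_append_lt L (M :: R) (fun x hx => ⟨M, by simp, hltL x hx⟩), sMc_cons,
        if_pos hltR]
    have h2 : smc (L ++ M :: R) = smc R := by
      rw [smc_append_lt L (M :: R) (fun x hx => ⟨m, by simp [hmR],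
        lt_of_le_of_ne (hminl x (by simp [hx])) (fun h => by
          subst h
          have := List.nodup_append'.mp hnd
          exact this.2.2 hx (by simp [hmR]))⟩), smc_cons,
        if_neg (fun hall => by have := hall m hmR; have := hltR m hmR; omega)]
      omega
    have hsum2 : sMc R + smc R = 3 := by omega
    have hndR : R.Nodup := (List.nodup_cons.mp hndMR).2
    have havR : Av R := hav.sublist ((List.sublist_cons_self M R).trans
      (List.sublist_append_right L (M :: R)))
    obtain ⟨P, Q, hPQ⟩ := List.append_of_mem hmR
    subst hPQ
    have hmP : m ∉ P := by
      have := List.nodup_append'.mp hndR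
      exact fun hmem => this.2.2 hmem (by simp)
    have hmQ : m ∉ Q := (List.nodup_cons.mp ((List.sublist_append_right P _).nodup hndR)).1
    have hndQ : Q.Nodup := (List.nodup_cons.mp ((List.sublist_append_right P _).nodup hndR)).2
    have hQm : ∀ v ∈ Q, m < v := fun v hv =>
      lt_of_le_of_ne (hminl v (by simp [hv])) (fun h => hmQ (h ▸ hv))
    have hQsorted : Q.Pairwise (· < ·) := av_after_min havR hndQ hQm
    have h3 : smc (P ++ m :: Q) = Q.length + 1 := by
      rw [smc_append_lt P (m :: Q) (fun x hx => ⟨m, by simp,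
        lt_of_le_of_ne (hminl x (by simp [hx])) (fun h => hmP (h ▸ hx))⟩), smc_cons,
        if_pos hQm, smc_sorted Q hQsorted]
    have hpos : 1 ≤ sMc (P ++ m :: Q) := sMc_pos _ (by simp)
    have hopt : (sMc (P ++ m :: Q) = 1 ∧ Q.length = 1) ∨
        (sMc (P ++ m :: Q) = 2 ∧ Q.length = 0) := by omega
    rcases hopt with ⟨hs1, hq1⟩ | ⟨hs2, hq0⟩
    · -- shape 2
      right; left
      obtain ⟨q, hq⟩ := List.length_eq_one_iff.mp hq1
      subst hq
      have hassoc : P ++ m :: [q] = (P ++ [m]) ++ [q] := by simp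
      have hPq : ∀ v ∈ P ++ [m], v < q := by
        apply sMc_eq_one_last_max (P ++ [m]) q
        · rw [← hassoc]; exact hndR
        · rw [← hassoc]; exact hs1
      refine ⟨L, P, q, by simp, fun v hv => hPq v (by simp [hv]), fun v hv =>
        hcross v hv q (by simp)⟩
    · -- shape 3
      right; right
      have hQnil : Q = [] := List.length_eq_zero_iff.mp hq0
      subst hQnil
      have h4 : sMc (P ++ [m]) = sMc P + 1 := by
        rw [sMc_append_gt P [m] (fun x hx y hy => by
          simp at hy; subst hy
          exact lt_of_le_of_ne (hminl x (by simp [hx])) (fun h => hmP (h ▸ hx))),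
          sMc_single]
      have hsP : sMc P = 1 := by omega
      have hPne : P ≠ [] := by
        intro h; subst h; simp [sMc] at hsP
      obtain ⟨B, x, hBx⟩ := (List.eq_nil_or_concat P).resolve_left hPne
      subst hBx
      rw [List.concat_eq_append] at *
      have hBlt : ∀ v ∈ B, v < x := by
        apply sMc_eq_one_last_max B x
        · exact (List.sublist_append_left _ [m]).nodup hndR
        · exact hsP
      refine ⟨L, B, x, by simp, hBlt, fun v hv => hcross v hv x (by simp)⟩
-- chunk G : helpers for the final count
lemma mem_permsF_of_nodup {S : Finset ℕ} {l : List ℕ} (hnd : l.Nodup)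
    (h : ∀ x, x ∈ l ↔ x ∈ S) : l ∈ permsF S := by
  rw [mem_permsF]
  have h1 : (↑l : Multiset ℕ).Nodup := hnd
  rw [Multiset.Nodup.ext h1 S.nodup]
  intro a
  rw [Multiset.mem_coe]
  exact (h a).trans Finset.mem_def

lemma delta_mem {S S2 : Finset ℕ} {m M : ℕ} (hS2 : S2.val = (S.val.erase M).erase m)
    {l : List ℕ} (hperm : l ∈ permsF S) (hav : Av l) : (l.erase M).erase m ∈ AvF S2 := by
  rw [mem_AvF]
  refine ⟨?_, hav.sublist (List.erase_sublist.trans List.erase_sublist)⟩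
  rw [mem_permsF, ← Multiset.coe_erase, ← Multiset.coe_erase, mem_permsF.mp hperm, hS2]

lemma sh1_erase {P : List ℕ} {m x M : ℕ} (hnd : (P ++ [m, x, M]).Nodup) :
    ((P ++ [m, x, M]).erase M).erase m = P ++ [x] := by
  have h1 : M ∉ P ++ [m, x] := by
    intro hc
    have h2 : ((P ++ [m, x]) ++ [M]).Nodup := by simpa using hnd
    exact (List.nodup_append'.mp h2).2.2 hc (by simp)
  have hmp : m ∉ P := by
    intro hc
    exact (List.nodup_append'.mp hnd).2.2 hc (by simp)
  have heq : P ++ [m, x, M] = (P ++ [m, x]) ++ [M] := by simp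
  have hmx : m ≠ x := by
    have h3 : ([m, x, M] : List ℕ).Nodup := (List.sublist_append_right P _).nodup hnd
    simp at h3
    exact h3.1.1
  rw [heq, List.erase_append_right _ h1]
  simp
  rw [List.erase_append_right _ hmp]
  simp [List.erase_cons, hmx]

lemma sh2_erase {L B : List ℕ} {m x M : ℕ} (hnd : (L ++ M :: B ++ [m, x]).Nodup) :
    ((L ++ M :: B ++ [m, x]).erase M).erase m = L ++ B ++ [x] := by
  have h0 : (L ++ M :: B).Nodup := (List.nodup_append'.mp hnd).1
  have hML : M ∉ L := fun hc => (List.nodup_append'.mp h0).2.2 hc (by simp)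
  have hmL : m ∉ L := by
    intro hc
    have h5 : m ∈ L ++ M :: B := by simp [hc]
    exact (List.nodup_append'.mp hnd).2.2 h5 (by simp)
  have hmB : m ∉ B := by
    intro hc
    have h5 : m ∈ L ++ M :: B := by simp [hc]
    exact (List.nodup_append'.mp hnd).2.2 h5 (by simp)
  rw [List.erase_append_left _ (by simp : M ∈ L ++ M :: B),
    List.erase_append_right _ hML, List.erase_cons_head,
    List.erase_append_right _ (by simp [hmL, hmB] : m ∉ L ++ B)]
  simp

lemma sh3_erase {L B : List ℕ} {m x M : ℕ} (hnd : (L ++ M :: B ++ [x, m]).Nodup) :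
    ((L ++ M :: B ++ [x, m]).erase M).erase m = L ++ B ++ [x] := by
  have h0 : (L ++ M :: B).Nodup := (List.nodup_append'.mp hnd).1
  have hML : M ∉ L := fun hc => (List.nodup_append'.mp h0).2.2 hc (by simp)
  have hmL : m ∉ L := by
    intro hc
    have h5 : m ∈ L ++ M :: B := by simp [hc]
    exact (List.nodup_append'.mp hnd).2.2 h5 (by simp)
  have hmB : m ∉ B := by
    intro hc
    have h5 : m ∈ L ++ M :: B := by simp [hc]
    exact (List.nodup_append'.mp hnd).2.2 h5 (by simp)
  have hmx : m ≠ x := by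
    have h4 : ([x, m] : List ℕ).Nodup := (List.nodup_append'.mp hnd).2.1
    simp at h4
    omega
  rw [List.erase_append_left _ (by simp : M ∈ L ++ M :: B),
    List.erase_append_right _ hML, List.erase_cons_head,
    List.erase_append_right _ (by simp [hmL, hmB] : m ∉ L ++ B)]
  simp [List.erase_cons, if_neg (Ne.symm hmx)]

lemma stat_iff_sum4 {S : Finset ℕ} {l : List ℕ} (hperm : l ∈ permsF S) (hcard : 3 ≤ S.card) :
    stat l = S.card - 3 ↔ sMc l + smc l = 4 := by
  have hnd := permsF_nodup hperm
  have hlen := permsF_length hperm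
  have hne : l ≠ [] := by
    intro h; subst h; simp at hlen; omega
  have hid := stat_add_sMc_add_smc l hne hnd
  omega

lemma upper_prefix_eq {L B : List ℕ} {x : ℕ} (hL : ∀ v ∈ L, x < v) (hB : ∀ v ∈ B, v < x) :
    (L ++ (B ++ [x])).takeWhile (fun v => decide (x < v)) = L := by
  induction L with
  | nil =>
    cases B with
    | nil => simp [List.takeWhile_cons]
    | cons b B =>
      have hxb : ¬ (x < b) := by have := hB b (by simp); omega
      simp [List.takeWhile_cons, hxb]
  | cons a L ih =>
    rw [List.cons_append, List.takeWhile_cons]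
    have hxa := hL a (by simp)
    rw [if_pos (by simpa using hxa)]
    rw [ih (fun v hv => hL v (by simp [hv]))]

lemma concat_inj' {A B : List ℕ} {a b : ℕ} (h : A ++ [a] = B ++ [b]) : A = B ∧ a = b := by
  have h1 : a = b := by
    have := congrArg List.getLast? h
    rw [List.getLast?_concat, List.getLast?_concat] at this
    exact Option.some_injective _ this
  subst h1
  exact ⟨List.append_cancel_right h, rfl⟩
-- chunk H : the three construction lemmas
lemma tau_facts {S S2 : Finset ℕ} {m M : ℕ}
    (hmin : ∀ v ∈ S, m ≤ v) (hmax : ∀ v ∈ S, v ≤ M)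
    (hS2 : ∀ v, v ∈ S2 ↔ v ∈ S ∧ v ≠ m ∧ v ≠ M) {τ : List ℕ} (hτ : τ ∈ AvF S2) :
    (∀ v ∈ τ, m < v ∧ v < M ∧ v ∈ S) ∧ τ.Nodup ∧ Av τ := by
  obtain ⟨hperm, hav⟩ := mem_AvF.mp hτ
  refine ⟨?_, permsF_nodup hperm, hav⟩
  intro v hv
  have h2 := (hS2 v).mp ((permsF_mem_iff hperm).mp hv)
  have h3 := hmin v h2.1
  have h4 := hmax v h2.1
  exact ⟨lt_of_le_of_ne h3 (Ne.symm h2.2.1), lt_of_le_of_ne h4 h2.2.2, h2.1⟩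

lemma build1 {S S2 : Finset ℕ} {m M : ℕ} (hm : m ∈ S) (hM : M ∈ S)
    (hmin : ∀ v ∈ S, m ≤ v) (hmax : ∀ v ∈ S, v ≤ M) (hmM : m ≠ M)
    (hS2 : ∀ v, v ∈ S2 ↔ v ∈ S ∧ v ≠ m ∧ v ≠ M) (hcard : 3 ≤ S.card)
    {P : List ℕ} {x : ℕ} (hτ : P ++ [x] ∈ AvF S2) :
    P ++ [m, x, M] ∈ permsF S ∧ Av (P ++ [m, x, M]) ∧ stat (P ++ [m, x, M]) = S.card - 3 := by
  obtain ⟨hvals, hndτ, havτ⟩ := tau_facts hmin hmax hS2 hτ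
  have hmM' : m < M := lt_of_le_of_ne (hmin M hM) hmM
  have hmx : m < x := (hvals x (by simp)).1
  have hxM : x < M := (hvals x (by simp)).2.1
  have hxP : x ∉ P := by
    intro hc
    exact (List.nodup_append'.mp hndτ).2.2 hc (by simp)
  have hndl : (P ++ [m, x, M]).Nodup := by
    rw [List.nodup_append']
    refine ⟨(List.nodup_append'.mp hndτ).1, by simp; omega, ?_⟩
    intro a ha
    have h1 := (hvals a (by simp [ha])).1
    have h2 := (hvals a (by simp [ha])).2.1
    simp
    refine ⟨by omega, fun h => hxP (h ▸ ha), by omega⟩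
  have hgt : ∀ v ∈ P ++ [x], m < v := fun v hv => (hvals v hv).1
  have hlt : ∀ v ∈ P ++ [x], v < M := fun v hv => (hvals v hv).2.1
  have hpermS : P ++ [m, x, M] ∈ permsF S := by
    apply mem_permsF_of_nodup hndl
    intro v
    constructor
    · intro hv
      simp at hv
      rcases hv with hv | hv | hv | hv
      · exact (hvals v (by simp [hv])).2.2
      · exact hv ▸ hm
      · exact hv ▸ (hvals x (by simp)).2.2
      · exact hv ▸ hM
    · intro hv
      by_cases h1 : v = m
      · simp [h1]
      by_cases h2 : v = M
      · simp [h2]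
      have : v ∈ P ++ [x] := (permsF_mem_iff (mem_AvF.mp hτ).1).mpr
        ((hS2 v).mpr ⟨hv, h1, h2⟩)
      simp at this ⊢
      tauto
  refine ⟨hpermS, ?_, ?_⟩
  · have hav1 : Av (P ++ [m, x]) := av_insert_min havτ hgt
    have hav2 := av_compose (L := P ++ [m, x]) (R := []) (M := M) hav1 Av_nil
      (by
        intro v hv
        simp at hv
        rcases hv with hv | hv | hv
        · have := (hvals v (by simp [hv])).2.1; omega
        · omega
        · omega)
      (by intro a ha y hy; simp at hy)
    have : (P ++ [m, x]) ++ M :: [] = P ++ [m, x, M] := by simp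
    rwa [this] at hav2
  · rw [stat_iff_sum4 hpermS hcard]
    have hsM : sMc (P ++ [m, x, M]) = 1 := by
      have heq : P ++ [m, x, M] = (P ++ [m, x]) ++ [M] := by simp
      rw [heq, sMc_append_lt _ _ (fun v hv => ⟨M, by simp, by
        simp at hv
        rcases hv with hv | hv | hv
        · have := (hvals v (by simp [hv])).2.1; omega
        · omega
        · omega⟩), sMc_single]
    have hsm : smc (P ++ [m, x, M]) = 3 := by
      rw [smc_append_lt P [m, x, M] (fun v hv => ⟨m, by simp, hgt v (by simp [hv])⟩)]
      have h1 : ∀ y ∈ [x, M], m < y := by intro y hy; simp at hy; rcases hy with h | h <;> omega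
      have h2 : ∀ y ∈ [M], x < y := by intro y hy; simp at hy; omega
      have h3 : ∀ y ∈ ([] : List ℕ), M < y := by simp
      rw [smc_cons, if_pos h1, smc_cons, if_pos h2, smc_cons, if_pos h3]
      simp [smc]
    omega

lemma build2 {S S2 : Finset ℕ} {m M : ℕ} (hm : m ∈ S) (hM : M ∈ S)
    (hmin : ∀ v ∈ S, m ≤ v) (hmax : ∀ v ∈ S, v ≤ M) (hmM : m ≠ M)
    (hS2 : ∀ v, v ∈ S2 ↔ v ∈ S ∧ v ≠ m ∧ v ≠ M) (hcard : 3 ≤ S.card)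
    {L B : List ℕ} {x : ℕ} (hτ : L ++ (B ++ [x]) ∈ AvF S2)
    (hLx : ∀ v ∈ L, x < v) (hBx : ∀ v ∈ B, v < x) :
    L ++ M :: B ++ [m, x] ∈ permsF S ∧ Av (L ++ M :: B ++ [m, x]) ∧
      stat (L ++ M :: B ++ [m, x]) = S.card - 3 := by
  obtain ⟨hvals, hndτ, havτ⟩ := tau_facts hmin hmax hS2 hτ
  have hmM' : m < M := lt_of_le_of_ne (hmin M hM) hmM
  have hmemτ : ∀ v, v ∈ L ∨ v ∈ B ∨ v = x → v ∈ L ++ (B ++ [x]) := by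
    intro v hv; simp; tauto
  have hmx : m < x := (hvals x (by simp)).1
  have hxM : x < M := (hvals x (by simp)).2.1
  have hshape : L ++ M :: B ++ [m, x] = L ++ (M :: (B ++ [m, x])) := by simp
  -- nodup of the canonical form
  have hndL : L.Nodup := (List.nodup_append'.mp hndτ).1
  have hndBx : (B ++ [x]).Nodup := (List.nodup_append'.mp hndτ).2.1
  have hdisjLBx : ∀ a ∈ L, a ∉ B ++ [x] := fun a ha => (List.nodup_append'.mp hndτ).2.2 ha
  have hndB : B.Nodup := (List.nodup_append'.mp hndBx).1
  have hxB : x ∉ B := fun hc => (List.nodup_append'.mp hndBx).2.2 hc (by simp)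
  have hndl : (L ++ (M :: (B ++ [m, x]))).Nodup := by
    rw [List.nodup_append']
    refine ⟨hndL, ?_, ?_⟩
    · rw [List.nodup_cons]
      constructor
      · intro hc
        simp at hc
        rcases hc with hc | hc | hc
        · have := (hvals M (hmemτ M (by tauto))).2.1; omega
        · omega
        · omega
      · rw [List.nodup_append']
        refine ⟨hndB, by simp; omega, ?_⟩
        intro a ha
        have h1 := (hvals a (hmemτ a (by tauto))).1
        simp
        exact ⟨by omega, fun h => hxB (h ▸ ha)⟩
    · intro a ha
      have h1 := (hvals a (hmemτ a (by tauto))).1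
      have h2 := (hvals a (hmemτ a (by tauto))).2.1
      have h3 := hdisjLBx a ha
      simp at h3 ⊢
      refine ⟨by omega, fun h => h3.1 h, by omega, fun h => (h3.2 (h ▸ rfl)).elim⟩
  have hpermS : L ++ M :: B ++ [m, x] ∈ permsF S := by
    rw [hshape]
    apply mem_permsF_of_nodup hndl
    intro v
    constructor
    · intro hv
      simp at hv
      rcases hv with hv | hv | hv | hv | hv
      · exact (hvals v (hmemτ v (by tauto))).2.2
      · exact hv ▸ hM
      · exact (hvals v (hmemτ v (by tauto))).2.2
      · exact hv ▸ hm
      · exact hv ▸ (hvals x (by simp)).2.2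
    · intro hv
      by_cases h1 : v = m
      · simp [h1]
      by_cases h2 : v = M
      · simp [h2]
      have : v ∈ L ++ (B ++ [x]) := (permsF_mem_iff (mem_AvF.mp hτ).1).mpr
        ((hS2 v).mpr ⟨hv, h1, h2⟩)
      simp at this ⊢
      tauto
  refine ⟨hpermS, ?_, ?_⟩
  · have havL : Av L := havτ.sublist (List.sublist_append_left _ _)
    have havBx : Av (B ++ [x]) := havτ.sublist (List.sublist_append_right _ _)
    have havW : Av (B ++ [m, x]) := av_insert_min havBx
      (fun v hv => (hvals v (by simp at hv ⊢; tauto)).1)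
    have hcomp := av_compose (L := L) (R := B ++ [m, x]) (M := M) havL havW
      (by
        intro v hv
        simp at hv
        rcases hv with hv | hv | hv | hv
        · exact (hvals v (hmemτ v (by tauto))).2.1
        · exact (hvals v (hmemτ v (by tauto))).2.1
        · omega
        · omega)
      (by
        intro a ha y hy
        have hxa := hLx a ha
        simp at hy
        rcases hy with hy | hy | hy
        · have := hBx y hy; omega
        · omega
        · omega)
    rw [hshape]
    exact hcomp
  · rw [stat_iff_sum4 hpermS hcard, hshape]
    have hltM : ∀ y ∈ B ++ [m, x], y < M := by
      intro y hy
      simp at hy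
      rcases hy with hy | hy | hy
      · exact (hvals y (hmemτ y (by tauto))).2.1
      · omega
      · omega
    have hsM : sMc (L ++ (M :: (B ++ [m, x]))) = 2 := by
      rw [sMc_append_lt L _ (fun v hv => ⟨M, by simp, (hvals v (hmemτ v (by tauto))).2.1⟩),
        sMc_cons, if_pos hltM,
        sMc_append_lt B [m, x] (fun v hv => ⟨x, by simp, hBx v hv⟩),
        sMc_cons, if_neg (fun hall => by have := hall x (by simp); omega), sMc_single]
    have hsm : smc (L ++ (M :: (B ++ [m, x]))) = 2 := by
      rw [smc_append_lt L _ (fun v hv => ⟨m, by simp,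
          (hvals v (hmemτ v (by tauto))).1⟩),
        smc_cons, if_neg (fun hall => by have := hall m (by simp); omega),
        smc_append_lt B [m, x] (fun v hv => ⟨m, by simp,
          (hvals v (hmemτ v (by tauto))).1⟩),
        smc_cons, if_pos (fun y hy => by simp at hy; omega), smc_single]
    omega

lemma build3 {S S2 : Finset ℕ} {m M : ℕ} (hm : m ∈ S) (hM : M ∈ S)
    (hmin : ∀ v ∈ S, m ≤ v) (hmax : ∀ v ∈ S, v ≤ M) (hmM : m ≠ M)
    (hS2 : ∀ v, v ∈ S2 ↔ v ∈ S ∧ v ≠ m ∧ v ≠ M) (hcard : 3 ≤ S.card)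
    {L B : List ℕ} {x : ℕ} (hτ : L ++ (B ++ [x]) ∈ AvF S2)
    (hLx : ∀ v ∈ L, x < v) (hBx : ∀ v ∈ B, v < x) :
    L ++ M :: B ++ [x, m] ∈ permsF S ∧ Av (L ++ M :: B ++ [x, m]) ∧
      stat (L ++ M :: B ++ [x, m]) = S.card - 3 := by
  obtain ⟨hvals, hndτ, havτ⟩ := tau_facts hmin hmax hS2 hτ
  have hmM' : m < M := lt_of_le_of_ne (hmin M hM) hmM
  have hmemτ : ∀ v, v ∈ L ∨ v ∈ B ∨ v = x → v ∈ L ++ (B ++ [x]) := by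
    intro v hv; simp; tauto
  have hmx : m < x := (hvals x (by simp)).1
  have hxM : x < M := (hvals x (by simp)).2.1
  have hshape : L ++ M :: B ++ [x, m] = L ++ (M :: (B ++ [x, m])) := by simp
  have hndL : L.Nodup := (List.nodup_append'.mp hndτ).1
  have hndBx : (B ++ [x]).Nodup := (List.nodup_append'.mp hndτ).2.1
  have hdisjLBx : ∀ a ∈ L, a ∉ B ++ [x] := fun a ha => (List.nodup_append'.mp hndτ).2.2 ha
  have hndB : B.Nodup := (List.nodup_append'.mp hndBx).1
  have hxB : x ∉ B := fun hc => (List.nodup_append'.mp hndBx).2.2 hc (by simp)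
  have hndl : (L ++ (M :: (B ++ [x, m]))).Nodup := by
    rw [List.nodup_append']
    refine ⟨hndL, ?_, ?_⟩
    · rw [List.nodup_cons]
      constructor
      · intro hc
        simp at hc
        rcases hc with hc | hc | hc
        · have := (hvals M (hmemτ M (by tauto))).2.1; omega
        · omega
        · omega
      · rw [List.nodup_append']
        refine ⟨hndB, by simp; omega, ?_⟩
        intro a ha
        have h1 := (hvals a (hmemτ a (by tauto))).1
        simp
        exact ⟨fun h => hxB (h ▸ ha), by omega⟩
    · intro a ha
      have h1 := (hvals a (hmemτ a (by tauto))).1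
      have h2 := (hvals a (hmemτ a (by tauto))).2.1
      have h3 := hdisjLBx a ha
      simp at h3 ⊢
      refine ⟨by omega, fun h => h3.1 h, fun h => (h3.2 (h ▸ rfl)).elim, by omega⟩
  have hpermS : L ++ M :: B ++ [x, m] ∈ permsF S := by
    rw [hshape]
    apply mem_permsF_of_nodup hndl
    intro v
    constructor
    · intro hv
      simp at hv
      rcases hv with hv | hv | hv | hv | hv
      · exact (hvals v (hmemτ v (by tauto))).2.2
      · exact hv ▸ hM
      · exact (hvals v (hmemτ v (by tauto))).2.2
      · exact hv ▸ (hvals x (by simp)).2.2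
      · exact hv ▸ hm
    · intro hv
      by_cases h1 : v = m
      · simp [h1]
      by_cases h2 : v = M
      · simp [h2]
      have : v ∈ L ++ (B ++ [x]) := (permsF_mem_iff (mem_AvF.mp hτ).1).mpr
        ((hS2 v).mpr ⟨hv, h1, h2⟩)
      simp at this ⊢
      tauto
  refine ⟨hpermS, ?_, ?_⟩
  · have havL : Av L := havτ.sublist (List.sublist_append_left _ _)
    have havBx : Av (B ++ [x]) := havτ.sublist (List.sublist_append_right _ _)
    have havW : Av (B ++ [x, m]) := by
      have h1 := av_concat_min havBx (fun v hv => (hvals v (by simp at hv ⊢; tauto)).1)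
      have h2 : (B ++ [x]) ++ [m] = B ++ [x, m] := by simp
      rwa [h2] at h1
    have hcomp := av_compose (L := L) (R := B ++ [x, m]) (M := M) havL havW
      (by
        intro v hv
        simp at hv
        rcases hv with hv | hv | hv | hv
        · exact (hvals v (hmemτ v (by tauto))).2.1
        · exact (hvals v (hmemτ v (by tauto))).2.1
        · omega
        · omega)
      (by
        intro a ha y hy
        have hxa := hLx a ha
        simp at hy
        rcases hy with hy | hy | hy
        · have := hBx y hy; omega
        · omega
        · omega)
    rw [hshape]
    exact hcomp
  · rw [stat_iff_sum4 hpermS hcard, hshape]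
    have hltM : ∀ y ∈ B ++ [x, m], y < M := by
      intro y hy
      simp at hy
      rcases hy with hy | hy | hy
      · exact (hvals y (hmemτ y (by tauto))).2.1
      · omega
      · omega
    have hsM : sMc (L ++ (M :: (B ++ [x, m]))) = 3 := by
      rw [sMc_append_lt L _ (fun v hv => ⟨M, by simp, (hvals v (hmemτ v (by tauto))).2.1⟩),
        sMc_cons, if_pos hltM,
        sMc_append_lt B [x, m] (fun v hv => ⟨x, by simp, hBx v hv⟩),
        sMc_cons, if_pos (fun y hy => by simp at hy; omega), sMc_single]
    have hsm : smc (L ++ (M :: (B ++ [x, m]))) = 1 := by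
      rw [smc_append_lt L _ (fun v hv => ⟨m, by simp,
          (hvals v (hmemτ v (by tauto))).1⟩),
        smc_cons, if_neg (fun hall => by have := hall m (by simp); omega),
        smc_append_lt B [x, m] (fun v hv => ⟨m, by simp,
          (hvals v (hmemτ v (by tauto))).1⟩),
        smc_cons, if_neg (fun hall => by have := hall m (by simp); omega), smc_single]
    omega
-- chunk I : the list-level main theorem
open scoped Classical in
theorem main_list (S : Finset ℕ) (hcard : 3 ≤ S.card) :
    ((permsF S).filter (fun l => Av l ∧ stat l = S.card - 3)).card
      = 3 * catalan (S.card - 2) := by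
  classical
  have hne : S.Nonempty := Finset.card_pos.mp (by omega)
  set m := S.min' hne with hmdef
  set M := S.max' hne with hMdef
  have hm : m ∈ S := S.min'_mem hne
  have hM : M ∈ S := S.max'_mem hne
  have hmin : ∀ v ∈ S, m ≤ v := fun v hv => S.min'_le v hv
  have hmax : ∀ v ∈ S, v ≤ M := fun v hv => S.le_max' v hv
  have hmM' : m < M := S.min'_lt_max'_of_card (by omega)
  have hmM : m ≠ M := by omega
  set S2 := (S.erase M).erase m with hS2def
  have hS2iff : ∀ v, v ∈ S2 ↔ v ∈ S ∧ v ≠ m ∧ v ≠ M := by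
    intro v
    rw [hS2def, Finset.mem_erase, Finset.mem_erase]
    tauto
  have hS2val : S2.val = (S.val.erase M).erase m := by
    rw [hS2def, Finset.erase_val, Finset.erase_val]
  have hS2card : S2.card = S.card - 2 := by
    rw [hS2def, Finset.card_erase_of_mem (Finset.mem_erase.mpr ⟨hmM, hm⟩),
      Finset.card_erase_of_mem hM]
    omega
  have hAvF2 : (AvF S2).card = catalan (S.card - 2) := AvF_card_catalan _ _ hS2card
  set p1 : List ℕ → Prop := fun l => ∃ P x, l = P ++ [m, x, M] with hp1
  set p2 : List ℕ → Prop := fun l =>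
    ∃ L B x, l = L ++ M :: B ++ [m, x] ∧ (∀ v ∈ B, v < x) ∧ (∀ v ∈ L, x < v) with hp2
  set p3 : List ℕ → Prop := fun l =>
    ∃ L B x, l = L ++ M :: B ++ [x, m] ∧ (∀ v ∈ B, v < x) ∧ (∀ v ∈ L, x < v) with hp3
  set MS := (permsF S).filter (fun l => Av l ∧ stat l = S.card - 3) with hMSdef
  have hMSfacts : ∀ l ∈ MS, l ∈ permsF S ∧ Av l ∧ stat l = S.card - 3 := by
    intro l hl
    have := Finset.mem_filter.mp hl
    exact ⟨this.1, this.2.1, this.2.2⟩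
  -- getLast? values per shape
  have last1 : ∀ l, p1 l → l.getLast? = some M := by
    rintro l ⟨P, x, rfl⟩
    rw [show P ++ [m, x, M] = (P ++ [m, x]) ++ [M] by simp, List.getLast?_concat]
  have last2 : ∀ l, p2 l → ∃ x L B, l.getLast? = some x ∧
      l = L ++ M :: B ++ [m, x] ∧ (∀ v ∈ B, v < x) ∧ (∀ v ∈ L, x < v) := by
    rintro l ⟨L, B, x, rfl, h1, h2⟩
    exact ⟨x, L, B, by rw [show L ++ M :: B ++ [m, x] = (L ++ M :: B ++ [m]) ++ [x] by simp,
      List.getLast?_concat], rfl, h1, h2⟩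
  have last3 : ∀ l, p3 l → l.getLast? = some m := by
    rintro l ⟨L, B, x, rfl, h1, h2⟩
    rw [show L ++ M :: B ++ [x, m] = (L ++ M :: B ++ [x]) ++ [m] by simp,
      List.getLast?_concat]
  -- pairwise exclusivity
  have d12 : ∀ l ∈ MS, p1 l → p2 l → False := by
    intro l hl h1 h2
    obtain ⟨x, L, B, hlast, hshape, _, _⟩ := last2 l h2
    rw [last1 l h1] at hlast
    have hxM : x = M := by injection hlast with h; omega
    subst hxM
    have hnd : l.Nodup := permsF_nodup (hMSfacts l hl).1
    rw [hshape] at hnd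
    have h5 : M ∉ ([m, M] : List ℕ) := (List.nodup_append'.mp hnd).2.2 (by simp)
    exact h5 (by simp)
  have d13 : ∀ l ∈ MS, p1 l → p3 l → False := by
    intro l hl h1 h3
    have := last1 l h1
    rw [last3 l h3] at this
    have hmM2 : m = M := by injection this with h
    omega
  have d23 : ∀ l ∈ MS, p2 l → p3 l → False := by
    intro l hl h2 h3
    obtain ⟨x, L, B, hlast, hshape, _, _⟩ := last2 l h2
    rw [last3 l h3] at hlast
    have hxm : x = m := by injection hlast with h; omega
    subst hxm
    have hnd : l.Nodup := permsF_nodup (hMSfacts l hl).1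
    rw [hshape] at hnd
    have := (List.nodup_append'.mp hnd).2.1
    simp at this
  -- splitting
  have hsplit : MS = MS.filter p1 ∪ MS.filter p2 ∪ MS.filter p3 := by
    ext l
    constructor
    · intro hl
      obtain ⟨hperm, hav, hstat⟩ := hMSfacts l hl
      have hsum4 := (stat_iff_sum4 hperm hcard).mp hstat
      have h3 := char_main hm hM hmin hmax hmM hperm hav hsum4
      rcases h3 with h | h | h
      · exact Finset.mem_union.mpr (Or.inl (Finset.mem_union.mpr
          (Or.inl (Finset.mem_filter.mpr ⟨hl, h⟩))))
      · exact Finset.mem_union.mpr (Or.inl (Finset.mem_union.mpr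
          (Or.inr (Finset.mem_filter.mpr ⟨hl, h⟩))))
      · exact Finset.mem_union.mpr (Or.inr (Finset.mem_filter.mpr ⟨hl, h⟩))
    · intro hl
      simp only [Finset.mem_union, Finset.mem_filter] at hl
      tauto
  -- the three bijections
  have hc1 : (MS.filter p1).card = (AvF S2).card := by
    apply Finset.card_bij (fun l _ => (l.erase M).erase m)
    · intro l hl
      obtain ⟨hperm, hav, _⟩ := hMSfacts l (Finset.mem_filter.mp hl).1
      exact delta_mem hS2val hperm hav
    · intro l1 hl1 l2 hl2 heq
      obtain ⟨P1, x1, he1⟩ := (Finset.mem_filter.mp hl1).2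
      obtain ⟨P2, x2, he2⟩ := (Finset.mem_filter.mp hl2).2
      have hnd1 : l1.Nodup := permsF_nodup (hMSfacts l1 (Finset.mem_filter.mp hl1).1).1
      have hnd2 : l2.Nodup := permsF_nodup (hMSfacts l2 (Finset.mem_filter.mp hl2).1).1
      rw [he1, sh1_erase (he1 ▸ hnd1), he2, sh1_erase (he2 ▸ hnd2)] at heq
      obtain ⟨hP, hx⟩ := concat_inj' heq
      rw [he1, he2, hP, hx]
    · intro τ hτ
      have hτne : τ ≠ [] := by
        intro h
        have := permsF_length (mem_AvF.mp hτ).1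
        rw [h, hS2card] at this
        simp at this
        omega
      obtain ⟨P, x, hPx⟩ := (List.eq_nil_or_concat τ).resolve_left hτne
      rw [List.concat_eq_append] at hPx
      subst hPx
      obtain ⟨hperm, hav, hstat⟩ := build1 hm hM hmin hmax hmM hS2iff hcard hτ
      refine ⟨P ++ [m, x, M], ?_, ?_⟩
      · exact Finset.mem_filter.mpr ⟨Finset.mem_filter.mpr ⟨hperm, hav, hstat⟩, ⟨P, x, rfl⟩⟩
      · exact sh1_erase (permsF_nodup hperm)
  have hc2 : (MS.filter p2).card = (AvF S2).card := by
    apply Finset.card_bij (fun l _ => (l.erase M).erase m)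
    · intro l hl
      obtain ⟨hperm, hav, _⟩ := hMSfacts l (Finset.mem_filter.mp hl).1
      exact delta_mem hS2val hperm hav
    · intro l1 hl1 l2 hl2 heq
      obtain ⟨L1, B1, x1, he1, hB1, hL1⟩ := (Finset.mem_filter.mp hl1).2
      obtain ⟨L2, B2, x2, he2, hB2, hL2⟩ := (Finset.mem_filter.mp hl2).2
      have hnd1 : l1.Nodup := permsF_nodup (hMSfacts l1 (Finset.mem_filter.mp hl1).1).1
      have hnd2 : l2.Nodup := permsF_nodup (hMSfacts l2 (Finset.mem_filter.mp hl2).1).1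
      rw [he1, sh2_erase (he1 ▸ hnd1), he2, sh2_erase (he2 ▸ hnd2)] at heq
      have heq' : (L1 ++ B1) ++ [x1] = (L2 ++ B2) ++ [x2] := by simpa using heq
      obtain ⟨hAB, hx⟩ := concat_inj' heq'
      subst hx
      have hL1' : L1 = (L1 ++ (B1 ++ [x1])).takeWhile (fun v => decide (x1 < v)) :=
        (upper_prefix_eq hL1 hB1).symm
      have hL2' : L2 = (L2 ++ (B2 ++ [x1])).takeWhile (fun v => decide (x1 < v)) :=
        (upper_prefix_eq hL2 hB2).symm
      have hLL : L1 = L2 := by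
        rw [hL1', hL2', show L1 ++ (B1 ++ [x1]) = (L1 ++ B1) ++ [x1] by simp,
          show L2 ++ (B2 ++ [x1]) = (L2 ++ B2) ++ [x1] by simp, hAB]
      have hBB : B1 = B2 := by
        rw [hLL] at hAB
        exact List.append_cancel_left hAB
      rw [he1, he2, hLL, hBB]
    · intro τ hτ
      have hτne : τ ≠ [] := by
        intro h
        have := permsF_length (mem_AvF.mp hτ).1
        rw [h, hS2card] at this
        simp at this
        omega
      obtain ⟨A, x, hPx⟩ := (List.eq_nil_or_concat τ).resolve_left hτne
      rw [List.concat_eq_append] at hPx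
      subst hPx
      have hndτ : (A ++ [x]).Nodup := permsF_nodup (mem_AvF.mp hτ).1
      obtain ⟨L, B, hA, hL, hB⟩ := av_prefix_split (mem_AvF.mp hτ).2
        (fun v hv h => (List.nodup_append'.mp hndτ).2.2 hv (by simp [h]))
      subst hA
      have hτ' : L ++ (B ++ [x]) ∈ AvF S2 := by
        rw [show L ++ (B ++ [x]) = (L ++ B) ++ [x] by simp]
        exact hτ
      obtain ⟨hperm, hav, hstat⟩ := build2 hm hM hmin hmax hmM hS2iff hcard hτ' hL hB
      refine ⟨L ++ M :: B ++ [m, x], ?_, ?_⟩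
      · exact Finset.mem_filter.mpr ⟨Finset.mem_filter.mpr ⟨hperm, hav, hstat⟩,
          ⟨L, B, x, rfl, hB, hL⟩⟩
      · rw [sh2_erase (permsF_nodup hperm)]
  have hc3 : (MS.filter p3).card = (AvF S2).card := by
    apply Finset.card_bij (fun l _ => (l.erase M).erase m)
    · intro l hl
      obtain ⟨hperm, hav, _⟩ := hMSfacts l (Finset.mem_filter.mp hl).1
      exact delta_mem hS2val hperm hav
    · intro l1 hl1 l2 hl2 heq
      obtain ⟨L1, B1, x1, he1, hB1, hL1⟩ := (Finset.mem_filter.mp hl1).2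
      obtain ⟨L2, B2, x2, he2, hB2, hL2⟩ := (Finset.mem_filter.mp hl2).2
      have hnd1 : l1.Nodup := permsF_nodup (hMSfacts l1 (Finset.mem_filter.mp hl1).1).1
      have hnd2 : l2.Nodup := permsF_nodup (hMSfacts l2 (Finset.mem_filter.mp hl2).1).1
      rw [he1, sh3_erase (he1 ▸ hnd1), he2, sh3_erase (he2 ▸ hnd2)] at heq
      have heq' : (L1 ++ B1) ++ [x1] = (L2 ++ B2) ++ [x2] := by simpa using heq
      obtain ⟨hAB, hx⟩ := concat_inj' heq'
      subst hx
      have hL1' : L1 = (L1 ++ (B1 ++ [x1])).takeWhile (fun v => decide (x1 < v)) :=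
        (upper_prefix_eq hL1 hB1).symm
      have hL2' : L2 = (L2 ++ (B2 ++ [x1])).takeWhile (fun v => decide (x1 < v)) :=
        (upper_prefix_eq hL2 hB2).symm
      have hLL : L1 = L2 := by
        rw [hL1', hL2', show L1 ++ (B1 ++ [x1]) = (L1 ++ B1) ++ [x1] by simp,
          show L2 ++ (B2 ++ [x1]) = (L2 ++ B2) ++ [x1] by simp, hAB]
      have hBB : B1 = B2 := by
        rw [hLL] at hAB
        exact List.append_cancel_left hAB
      rw [he1, he2, hLL, hBB]
    · intro τ hτ
      have hτne : τ ≠ [] := by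
        intro h
        have := permsF_length (mem_AvF.mp hτ).1
        rw [h, hS2card] at this
        simp at this
        omega
      obtain ⟨A, x, hPx⟩ := (List.eq_nil_or_concat τ).resolve_left hτne
      rw [List.concat_eq_append] at hPx
      subst hPx
      have hndτ : (A ++ [x]).Nodup := permsF_nodup (mem_AvF.mp hτ).1
      obtain ⟨L, B, hA, hL, hB⟩ := av_prefix_split (mem_AvF.mp hτ).2
        (fun v hv h => (List.nodup_append'.mp hndτ).2.2 hv (by simp [h]))
      subst hA
      have hτ' : L ++ (B ++ [x]) ∈ AvF S2 := by
        rw [show L ++ (B ++ [x]) = (L ++ B) ++ [x] by simp]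
        exact hτ
      obtain ⟨hperm, hav, hstat⟩ := build3 hm hM hmin hmax hmM hS2iff hcard hτ' hL hB
      refine ⟨L ++ M :: B ++ [x, m], ?_, ?_⟩
      · exact Finset.mem_filter.mpr ⟨Finset.mem_filter.mpr ⟨hperm, hav, hstat⟩,
          ⟨L, B, x, rfl, hB, hL⟩⟩
      · rw [sh3_erase (permsF_nodup hperm)]
  -- assemble
  have hdisj12 : Disjoint (MS.filter p1) (MS.filter p2) := by
    rw [Finset.disjoint_left]
    intro l h1 h2
    exact d12 l (Finset.mem_filter.mp h1).1 (Finset.mem_filter.mp h1).2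
      (Finset.mem_filter.mp h2).2
  have hdisj3 : Disjoint (MS.filter p1 ∪ MS.filter p2) (MS.filter p3) := by
    rw [Finset.disjoint_left]
    intro l h1 h3
    rcases Finset.mem_union.mp h1 with h | h
    · exact d13 l (Finset.mem_filter.mp h).1 (Finset.mem_filter.mp h).2
        (Finset.mem_filter.mp h3).2
    · exact d23 l (Finset.mem_filter.mp h).1 (Finset.mem_filter.mp h).2
        (Finset.mem_filter.mp h3).2
  calc MS.card = (MS.filter p1 ∪ MS.filter p2 ∪ MS.filter p3).card := by rw [← hsplit]
    _ = (MS.filter p1 ∪ MS.filter p2).card + (MS.filter p3).card :=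
        Finset.card_union_of_disjoint hdisj3
    _ = (MS.filter p1).card + (MS.filter p2).card + (MS.filter p3).card := by
        rw [Finset.card_union_of_disjoint hdisj12]
    _ = 3 * catalan (S.card - 2) := by rw [hc1, hc2, hc3, hAvF2]; ring
-- chunk J : bridge from (Equiv.Perm (Fin n)) to lists
lemma av_iff {n : ℕ} (σ : Equiv.Perm (Fin n)) :
    avoids132 σ ↔ Av (List.ofFn fun i => (σ i : ℕ)) := by
  have hlen : (List.ofFn fun i => ((σ i : ℕ))).length = n := by simp
  have hget : ∀ i : Fin (List.ofFn fun i => ((σ i : ℕ))).length,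
      (List.ofFn fun i => ((σ i : ℕ))).get i = ((σ (Fin.cast hlen i) : ℕ)) := by
    intro i
    rw [List.get_ofFn]
  constructor
  · intro hA a b c hsub hacb
    obtain ⟨hac, hcb⟩ := hacb
    obtain ⟨is, hmap, hpw⟩ := List.sublist_eq_map_getElem hsub
    have hlen3 : is.length = 3 := by
      have := congrArg List.length hmap
      simpa using this.symm
    obtain ⟨i, j, k, rfl⟩ := List.length_eq_three.mp hlen3
    simp only [List.map_cons, List.map_nil, List.cons.injEq, and_true] at hmap
    obtain ⟨ha, hb, hc⟩ := hmap
    have hij : i < j := (List.pairwise_cons.mp hpw).1 j (by simp)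
    have hjk : j < k := (List.pairwise_cons.mp (List.pairwise_cons.mp hpw).2).1 k (by simp)
    have e1 : ((σ (Fin.cast hlen i)) : ℕ) = a := (hget i).symm.trans ha.symm
    have e2 : ((σ (Fin.cast hlen j)) : ℕ) = b := (hget j).symm.trans hb.symm
    have e3 : ((σ (Fin.cast hlen k)) : ℕ) = c := (hget k).symm.trans hc.symm
    apply hA
    refine ⟨Fin.cast hlen i, Fin.cast hlen j, Fin.cast hlen k, ?_, ?_, ?_, ?_⟩
    · rw [Fin.lt_def, Fin.coe_cast, Fin.coe_cast]; exact hij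
    · rw [Fin.lt_def, Fin.coe_cast, Fin.coe_cast]; exact hjk
    · rw [Fin.lt_def, e1, e3]; exact hac
    · rw [Fin.lt_def, e3, e2]; exact hcb
  · rintro hAv ⟨i, j, k, hij, hjk, h1, h2⟩
    have hpw : List.Pairwise (fun x1 x2 : Fin (List.ofFn fun i => ((σ i : ℕ))).length =>
        (x1 : ℕ) < (x2 : ℕ)) [Fin.cast hlen.symm i, Fin.cast hlen.symm j, Fin.cast hlen.symm k] := by
      simp only [List.pairwise_cons, List.mem_cons, List.mem_singleton, List.not_mem_nil]
      refine ⟨?_, ?_, ?_⟩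
      · intro a ha
        rcases ha with ha | ha | ha
        · subst ha; simpa using hij
        · subst ha; simpa using lt_trans hij hjk
        · simp at ha
      · intro a ha
        rcases ha with ha | ha
        · subst ha; simpa using hjk
        · simp at ha
      · simp
    have hsub : List.map (List.ofFn fun i => ((σ i : ℕ))).get
        [Fin.cast hlen.symm i, Fin.cast hlen.symm j, Fin.cast hlen.symm k] <+
        List.ofFn fun i => ((σ i : ℕ)) := List.map_getElem_sublist hpw
    rw [List.map_cons, List.map_cons, List.map_cons, List.map_nil,
      hget, hget, hget] at hsub
    have hci : Fin.cast hlen (Fin.cast hlen.symm i) = i := by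
      apply Fin.ext; simp
    have hcj : Fin.cast hlen (Fin.cast hlen.symm j) = j := by
      apply Fin.ext; simp
    have hck : Fin.cast hlen (Fin.cast hlen.symm k) = k := by
      apply Fin.ext; simp
    rw [hci, hcj, hck] at hsub
    exact hAv _ _ _ hsub ⟨h1, h2⟩

lemma card_filter_fin_succ {n : ℕ} (P : Fin (n+1) → Prop) [DecidablePred P] :
    (Finset.univ.filter P).card =
      (if P 0 then 1 else 0) + ((Finset.univ.filter fun i : Fin n => P i.succ)).card := by
  rw [Finset.card_filter, Finset.card_filter, Fin.sum_univ_succ]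

lemma stat_ofFn : ∀ (n : ℕ) (g : Fin n → ℕ),
    stat (List.ofFn g) = (Finset.univ.filter fun i : Fin n =>
      (∃ j, i < j ∧ g i < g j) ∧ (∃ j, i < j ∧ g j < g i)).card := by
  intro n
  induction n with
  | zero => intro g; simp [stat]
  | succ n ih =>
    intro g
    classical
    rw [List.ofFn_succ, stat_cons, ih (fun i => g i.succ),
      card_filter_fin_succ (fun i : Fin (n+1) => (∃ j, i < j ∧ g i < g j) ∧ (∃ j, i < j ∧ g j < g i))]
    have he1 : ((∃ j : Fin (n+1), 0 < j ∧ g 0 < g j) ∧ (∃ j : Fin (n+1), 0 < j ∧ g j < g 0)) ↔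
        ((∃ y ∈ List.ofFn fun i : Fin n => g i.succ, g 0 < y) ∧
         (∃ y ∈ List.ofFn fun i : Fin n => g i.succ, y < g 0)) := by
      constructor
      · rintro ⟨⟨j, hj0, hj⟩, ⟨k, hk0, hk⟩⟩
        rcases Fin.eq_zero_or_eq_succ j with h | ⟨j', rfl⟩
        · subst h; simp at hj0
        rcases Fin.eq_zero_or_eq_succ k with h | ⟨k', rfl⟩
        · subst h; simp at hk0
        exact ⟨⟨g j'.succ, by simp [List.mem_ofFn], hj⟩,
          ⟨g k'.succ, by simp [List.mem_ofFn], hk⟩⟩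
      · rintro ⟨⟨y, hy, hgy⟩, ⟨z, hz, hgz⟩⟩
        rw [List.mem_ofFn] at hy hz
        obtain ⟨j', hj'⟩ := hy
        obtain ⟨k', hk'⟩ := hz
        have hj2 : g j'.succ = y := hj'
        have hk2 : g k'.succ = z := hk'
        exact ⟨⟨j'.succ, Fin.succ_pos j', by rw [hj2]; exact hgy⟩,
          ⟨k'.succ, Fin.succ_pos k', by rw [hk2]; exact hgz⟩⟩
    have he3 : (Finset.univ.filter fun i : Fin n =>
          (∃ j : Fin (n+1), i.succ < j ∧ g i.succ < g j) ∧
          (∃ j : Fin (n+1), i.succ < j ∧ g j < g i.succ)).card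
        = (Finset.univ.filter fun i : Fin n =>
          (∃ j : Fin n, i < j ∧ g i.succ < g j.succ) ∧
          (∃ j : Fin n, i < j ∧ g j.succ < g i.succ)).card := by
      congr 1
      apply Finset.filter_congr
      intro i _
      have hconv : ∀ (Q : Fin (n+1) → Prop), (∃ j : Fin (n+1), i.succ < j ∧ Q j) ↔
          (∃ j : Fin n, i < j ∧ Q j.succ) := by
        intro Q
        constructor
        · rintro ⟨j, hij, hQ⟩
          rcases Fin.eq_zero_or_eq_succ j with h | ⟨j', rfl⟩
          · subst h; exact absurd hij (by simp [Fin.lt_def])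
          · exact ⟨j', Fin.succ_lt_succ_iff.mp hij, hQ⟩
        · rintro ⟨j, hij, hQ⟩
          exact ⟨j.succ, Fin.succ_lt_succ_iff.mpr hij, hQ⟩
      rw [hconv (fun j => g i.succ < g j), hconv (fun j => g j < g i.succ)]
    rw [he3]
    by_cases h : (∃ j : Fin (n+1), 0 < j ∧ g 0 < g j) ∧ (∃ j : Fin (n+1), 0 < j ∧ g j < g 0)
    · rw [if_pos h, if_pos (he1.mp h)]
      omega
    · rw [if_neg h, if_neg (fun hc => h (he1.mpr hc))]
      omega

lemma mmp_eq {n : ℕ} (σ : Equiv.Perm (Fin n)) :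
    mmp 1 0 0 1 σ = stat (List.ofFn fun i => (σ i : ℕ)) := by
  classical
  rw [mmp, Nat.card_eq_fintype_card, Fintype.card_subtype, stat_ofFn]
  congr 1
  apply Finset.filter_congr
  intro i _
  constructor
  · rintro ⟨h1, -, -, h4⟩
    obtain ⟨j, hj⟩ := Finset.card_pos.mp (by omega : 0 < (Finset.univ.filter
      fun j => i < j ∧ σ i < σ j).card)
    obtain ⟨k, hk⟩ := Finset.card_pos.mp (by omega : 0 < (Finset.univ.filter
      fun j => i < j ∧ σ j < σ i).card)
    obtain ⟨-, hij, hlt⟩ := Finset.mem_filter.mp hj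
    obtain ⟨-, hik, hlt2⟩ := Finset.mem_filter.mp hk
    exact ⟨⟨j, hij, hlt⟩, ⟨k, hik, hlt2⟩⟩
  · rintro ⟨⟨j, hij, hlt⟩, ⟨k, hik, hlt2⟩⟩
    refine ⟨?_, by omega, by omega, ?_⟩
    · exact Finset.card_pos.mpr ⟨j, Finset.mem_filter.mpr ⟨Finset.mem_univ _, hij, hlt⟩⟩
    · exact Finset.card_pos.mpr ⟨k, Finset.mem_filter.mpr ⟨Finset.mem_univ _, hik, hlt2⟩⟩

open scoped Classical in
theorem stmt16' (n : ℕ) (hn : 3 ≤ n) :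
    Nat.card {σ : Equiv.Perm (Fin n) // avoids132 σ ∧ mmp 1 0 0 1 σ = n - 3} =
      3 * catalan (n - 2) := by
  classical
  rw [Nat.card_eq_fintype_card, Fintype.card_subtype]
  have hr : (Finset.range n).card = n := Finset.card_range n
  have hmain := main_list (Finset.range n) (by rw [hr]; exact hn)
  rw [hr] at hmain
  rw [← hmain]
  apply Finset.card_bij (fun σ _ => List.ofFn fun i => ((σ i : ℕ)))
  · intro σ hσ
    obtain ⟨hav, hmmp⟩ := (Finset.mem_filter.mp hσ).2
    have hperm : (List.ofFn fun i => ((σ i : ℕ))) ∈ permsF (Finset.range n) := by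
      apply mem_permsF_of_nodup
      · rw [List.nodup_ofFn]
        intro i j hij
        exact σ.injective (Fin.ext hij)
      · intro x
        rw [List.mem_ofFn]
        constructor
        · rintro ⟨i, rfl⟩
          exact Finset.mem_range.mpr (σ i).isLt
        · intro hx
          exact ⟨σ.symm ⟨x, Finset.mem_range.mp hx⟩, by simp⟩
    refine Finset.mem_filter.mpr ⟨hperm, (av_iff σ).mp hav, ?_⟩
    rw [← mmp_eq σ, hmmp]
  · intro σ1 h1 σ2 h2 heq
    have h3 := List.ofFn_injective heq
    ext i
    exact congrFun h3 i
  · intro l hl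
    obtain ⟨hperm, hav, hstat⟩ : l ∈ permsF (Finset.range n) ∧ Av l ∧ stat l = n - 3 := by
      have := Finset.mem_filter.mp hl
      exact ⟨this.1, this.2.1, this.2.2⟩
    have hlen : l.length = n := by rw [permsF_length hperm, hr]
    have hnd := permsF_nodup hperm
    have hmemr : ∀ x ∈ l, x < n := fun x hx =>
      Finset.mem_range.mp ((permsF_mem_iff hperm).mp hx)
    have hgetlt : ∀ i : Fin n, l.get (Fin.cast hlen.symm i) < n := by
      intro i
      exact hmemr _ (l.get_mem _)
    set f : Fin n → Fin n := fun i => ⟨l.get (Fin.cast hlen.symm i), hgetlt i⟩ with hf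
    have hfinj : Function.Injective f := by
      intro a b hab
      have h1 : l.get (Fin.cast hlen.symm a) = l.get (Fin.cast hlen.symm b) := by
        have := congrArg Fin.val hab
        simpa [hf] using this
      have h2 := List.nodup_iff_injective_get.mp hnd h1
      have h3 := congrArg Fin.val h2
      simp at h3
      exact Fin.ext h3
    have hfbij := Finite.injective_iff_bijective.mp hfinj
    refine ⟨Equiv.ofBijective f hfbij, ?_, ?_⟩
    · have hofn : (List.ofFn fun i => ((Equiv.ofBijective f hfbij i : ℕ))) = l := by
        apply List.ext_get (by simp [hlen])
        intro t ht1 ht2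
        rw [List.get_ofFn]
        show (f _ : ℕ) = _
        rw [show ∀ (i : Fin n), (f i : ℕ) = l.get (Fin.cast hlen.symm i) from fun i => rfl]
        congr 1
      refine Finset.mem_filter.mpr ⟨Finset.mem_univ _, ?_, ?_⟩
      · rw [av_iff, hofn]
        exact hav
      · rw [mmp_eq, hofn, hstat]
    · apply List.ext_get (by simp [hlen])
      intro t ht1 ht2
      rw [List.get_ofFn]
      show (f _ : ℕ) = _
      rw [show ∀ (i : Fin n), (f i : ℕ) = l.get (Fin.cast hlen.symm i) from fun i => rfl]
      congr 1

theorem stmt16 (n : ℕ) (hn : 3 ≤ n) :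
    Nat.card {σ : Equiv.Perm (Fin n) // avoids132 σ ∧ mmp 1 0 0 1 σ = n - 3} =
      3 * catalan (n - 2) := by
  exact stmt16' n hn
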